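/- arXiv:math-ph/0505021 — 5 statements merged into one kernel-verified Lean document; each statement's English description precedes it below -/
import Mathlib

section
/- For any partition λ with Frobenius coordinates (p_1,…,p_d | q_1,…,q_d), the Schur function satisfies the Giambelli formula: s_λ = det[ s_{(p_i | q_j)} ]_{i,j=1}^d, where s_{(p|q)} denotes the Schur function of the hook partition (p+1, 1^q). -/
/-!
STATEMENT 0: Giambelli formula for Schur functions.
We realize the ring of symmetric functions as Λ = ℚ[h₁, h₂, …] (a polynomial
ring in the algebraically independent complete homogeneous symmetric functions),
and define Schur functions via the Jacobi–Trudi determinant.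
-/

noncomputable section

/-- The ring of symmetric functions, realized as the polynomial ring in the
complete homogeneous symmetric functions `h₁, h₂, …`. -/
abbrev SymFn : Type := MvPolynomial ℕ ℚ

/-- The complete homogeneous symmetric function `h_k` (with the conventions
`h_0 = 1` and `h_k = 0` for `k < 0`). -/
def hh (k : ℤ) : SymFn :=
  if k < 0 then 0 else if k = 0 then 1 else MvPolynomial.X k.toNat

/-- The Schur function `s_μ`, defined through the Jacobi–Trudi formula
`s_μ = det [h_{μ_i - i + j}]_{i,j=1}^k`, where `k` is any number `≥ ℓ(μ)`
(here `μ` is 0-indexed: `μ 0, μ 1, …` are the parts). -/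
def schur (μ : ℕ → ℕ) (k : ℕ) : SymFn :=
  Matrix.det (Matrix.of fun i j : Fin k => hh ((μ i : ℤ) - (i : ℤ) + (j : ℤ)))

/-- The hook partition `(p|q) = (p+1, 1^q)` (0-indexed parts). -/
def hookP (p q : ℕ) : ℕ → ℕ := fun i => if i = 0 then p + 1 else if i ≤ q then 1 else 0

/-- The conjugate (transposed) partition: `μ'_i = #{j : μ_j > i}` (0-indexed). -/
def conjP (μ : ℕ → ℕ) (i : ℕ) : ℕ := Nat.card {j : ℕ // i < μ j}

lemma hh_neg {k : ℤ} (h : k < 0) : hh k = 0 := by simp [hh, h]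
lemma hh_zero : hh 0 = 1 := by simp [hh]

/-- elementary symmetric functions, defined by the alternating recurrence -/
def ee : ℕ → SymFn
  | 0 => 1
  | (m+1) => ∑ u : Fin (m+1), (-1:SymFn)^(m - (u:ℕ)) * ee u * hh ((m:ℤ) + 1 - u)
  decreasing_by exact u.isLt

lemma ee_zero : ee 0 = 1 := by simp [ee]

lemma ee_succ (m : ℕ) : ee (m+1) =
    ∑ u ∈ Finset.range (m+1), (-1:SymFn)^(m - u) * ee u * hh ((m:ℤ) + 1 - u) := by
  rw [ee, Fin.sum_univ_eq_sum_range (fun u => (-1:SymFn)^(m - u) * ee u * hh ((m:ℤ) + 1 - u))]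

/-- the truncated alternating sum -/
def Sc (A : ℤ) (c : ℕ) : SymFn :=
  ∑ u ∈ Finset.range (c+1), (-1:SymFn)^u * ee u * hh (A - u)

lemma ident (m : ℕ) :
    (∑ u ∈ Finset.range (m+1), (-1:SymFn)^u * ee u * hh ((m:ℤ) - u)) =
      if m = 0 then 1 else 0 := by
  cases m with
  | zero => simp [hh_zero, ee_zero]
  | succ m =>
    rw [Finset.sum_range_succ]
    push_cast
    rw [sub_self, hh_zero, mul_one, ee_succ]
    rw [Finset.mul_sum, ← Finset.sum_add_distrib]
    show _ = (0:SymFn)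
    apply Finset.sum_eq_zero
    intro u hu
    have hu' : u ≤ m := Nat.lt_succ_iff.mp (Finset.mem_range.mp hu)
    have : (-1:SymFn)^(m+1) * ((-1:SymFn)^(m-u)) = -(-1:SymFn)^u := by
      have : (m+1) + (m - u) = 2*(m-u) + (2*u + 1) - u + (u - u) := by omega
      rw [← pow_add, show (m+1) + (m-u) = 2*(m+1-u) + (u+1) - 2 by omega]
      rw [show 2*(m+1-u) + (u+1) - 2 = 2*(m-u) + (u+1) by omega]
      rw [pow_add, pow_mul]
      simp [pow_succ]
    calc (-1:SymFn)^u * ee u * hh ((m:ℤ)+1-u) + (-1:SymFn)^(m+1) * ((-1:SymFn)^(m-u) * ee u * hh ((m:ℤ)+1-u))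
        = ((-1:SymFn)^u + (-1:SymFn)^(m+1) * (-1:SymFn)^(m-u)) * (ee u * hh ((m:ℤ)+1-u)) := by ring
      _ = 0 := by rw [this]; ring

lemma Sc_delta {A : ℤ} {c : ℕ} (h : A ≤ c) : Sc A c = if A = 0 then 1 else 0 := by
  rcases lt_or_ge A 0 with hA | hA
  · have : Sc A c = 0 := Finset.sum_eq_zero (fun u _ => by
      rw [hh_neg (by omega : A - (u:ℕ) < 0)]; ring)
    rw [this, if_neg (by omega)]
  · obtain ⟨m, rfl⟩ := Int.eq_ofNat_of_zero_le hA
    have hm : m ≤ c := by exact_mod_cast h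
    have := ident m
    rw [Sc, ← Finset.sum_subset (Finset.range_subset_range.mpr (by omega : m+1 ≤ c+1))
      (fun u _ hu => by
        rw [hh_neg (by
          have : m + 1 ≤ u := by simpa using Finset.mem_range.not.mp hu <;> omega
          omega)]
        ring)]
    rw [ident m]
    norm_num

/-- the unitriangular matrix of (signed) elementary symmetric functions -/
def TT (n : ℕ) : Matrix (Fin n) (Fin n) SymFn :=
  Matrix.of fun t j => if (t:ℕ) ≤ (j:ℕ) then (-1:SymFn)^((j:ℕ)-(t:ℕ)) * ee ((j:ℕ)-(t:ℕ)) else 0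

lemma det_TT (n : ℕ) : (TT n).det = 1 := by
  have h : (TT n).BlockTriangular id := by
    intro i j hji
    simp only [TT, Matrix.of_apply, id] at *
    rw [if_neg (by exact_mod_cast Nat.not_le.mpr hji)]
  rw [Matrix.det_of_upperTriangular h]
  apply Finset.prod_eq_one
  intro t _
  simp [TT, ee_zero]

lemma mulrow (a : ℤ) {n : ℕ} (j : Fin n) :
    (∑ t : Fin n, hh (a + (t:ℕ)) * TT n t j) = Sc (a + (j:ℕ)) (j:ℕ) := by
  set G : ℕ → SymFn := fun t =>
    if t ≤ (j:ℕ) then (-1:SymFn)^((j:ℕ)-t) * ee ((j:ℕ)-t) * hh (a+(t:ℤ)) else 0 with hG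
  have h1 : (∑ t : Fin n, hh (a + (t:ℕ)) * TT n t j) = ∑ t ∈ Finset.range n, G t := by
    rw [← Fin.sum_univ_eq_sum_range G]
    apply Finset.sum_congr rfl
    intro t _
    simp only [hG, TT, Matrix.of_apply]
    split <;> ring
  rw [h1, ← Finset.sum_subset (Finset.range_subset_range.mpr (by omega : (j:ℕ)+1 ≤ n))
    (fun t _ ht => by
      have : (j:ℕ) + 1 ≤ t := by simpa using Finset.mem_range.not.mp ht
      simp only [hG]
      rw [if_neg (by omega)])]
  rw [← Finset.sum_range_reflect G ((j:ℕ)+1), Sc]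
  apply Finset.sum_congr rfl
  intro u hu
  have hu' : u ≤ (j:ℕ) := Nat.lt_succ_iff.mp (Finset.mem_range.mp hu)
  simp only [hG]
  rw [if_pos (by omega), show (j:ℕ) + 1 - 1 - u = (j:ℕ) - u from by omega,
    show (j:ℕ) - ((j:ℕ) - u) = u from by omega,
    show a + (((j:ℕ) - u : ℕ) : ℤ) = a + (j:ℕ) - u from by push_cast [hu']; ring]

lemma DETU : ∀ (n d : ℕ) (hd : d ≤ n) (N : Matrix (Fin n) (Fin n) SymFn),
    (∀ i : Fin n, d ≤ (i:ℕ) → ∀ j, N i j = if j = i then 1 else 0) →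
    N.det = Matrix.det (Matrix.of fun i j : Fin d => N (Fin.castLE hd i) (Fin.castLE hd j)) := by
  intro n
  induction n with
  | zero =>
    intro d hd N h
    have : d = 0 := Nat.le_zero.mp hd
    subst this
    simp [Matrix.det_fin_zero]
  | succ n ih =>
    intro d hd N h
    rcases Nat.lt_or_ge d (n+1) with hlt | hge
    · have hd' : d ≤ n := by omega
      rw [Matrix.det_succ_row N (Fin.last n)]
      rw [Finset.sum_eq_single (Fin.last n)]
      · rw [h (Fin.last n) (by simp [Fin.last]; omega) (Fin.last n), if_pos rfl]
        rw [Fin.succAbove_last]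
        have hN' : ∀ i : Fin n, d ≤ (i:ℕ) → ∀ j,
            (N.submatrix Fin.castSucc Fin.castSucc) i j = if j = i then 1 else 0 := by
          intro i hi j
          rw [Matrix.submatrix_apply, h (Fin.castSucc i) (by simpa using hi) (Fin.castSucc j)]
          simp [Fin.castSucc_inj]
        rw [ih d hd' _ hN']
        have : (-1:SymFn) ^ ((Fin.last n : ℕ) + (Fin.last n : ℕ)) = 1 := by
          rw [Fin.val_last]; exact Even.neg_one_pow ⟨n, rfl⟩
        rw [this, one_mul, one_mul]
        congr 1
      · intro j _ hj
        rw [h (Fin.last n) (by simp [Fin.last]; omega) j, if_neg hj]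
        ring
      · intro hmem
        exact absurd (Finset.mem_univ _) hmem
    · have : d = n+1 := le_antisymm hd hge
      subst this
      congr 1

lemma cycleRange_lt_iff {m : ℕ} (c : Fin (m+1)) {v w : Fin (m+1)} (hv : v ≠ c) (hw : w ≠ c)
    (hvw : v < w) : Fin.cycleRange c v < Fin.cycleRange c w := by
  have hv' := Fin.lt_or_lt_of_ne hv
  have hw' := Fin.lt_or_lt_of_ne hw
  rcases hv' with h1 | h1 <;> rcases hw' with h2 | h2
  · rw [Fin.lt_def, Fin.coe_cycleRange_of_lt h1, Fin.coe_cycleRange_of_lt h2]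
    have := Fin.lt_def.mp hvw
    have hc : (c:ℕ) < m+1 := c.isLt
    have := Fin.lt_def.mp h2
    omega
  · rw [Fin.lt_def, Fin.coe_cycleRange_of_lt h1, Fin.cycleRange_of_gt h2]
    have := Fin.lt_def.mp h1
    have := Fin.lt_def.mp h2
    omega
  · exact absurd (lt_trans h2 (lt_trans h1 hvw)) (lt_irrefl _)
  · rw [Fin.cycleRange_of_gt h1, Fin.cycleRange_of_gt h2]
    exact hvw

lemma perm_strictMono_eq_one {m : ℕ} (π : Equiv.Perm (Fin m)) (h : StrictMono π) : π = 1 := by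
  have hle0 : ∀ k, ∀ i : Fin m, (i:ℕ) = k → k ≤ (π i : ℕ) := by
    intro k
    induction k with
    | zero => intro i _; exact Nat.zero_le _
    | succ k ih =>
      intro i hi
      have hk : k < m := by have := i.isLt; omega
      have hj : π ⟨k, hk⟩ < π i := h (by rw [Fin.lt_def]; simp [hi])
      have h2 := ih ⟨k, hk⟩ rfl
      have h3 := Fin.lt_def.mp hj
      omega
  have hle : ∀ i : Fin m, (i:ℕ) ≤ (π i : ℕ) := fun i => hle0 (i:ℕ) i rfl
  have hsum : (∑ i : Fin m, (π i : ℕ)) = ∑ i : Fin m, (i : ℕ) := by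
    exact Equiv.sum_comp π Fin.val
  have heq : ∀ i ∈ Finset.univ, ((i : Fin m) : ℕ) = (π i : ℕ) := by
    rw [← Finset.sum_eq_sum_iff_of_le (fun i _ => hle i)]
    exact hsum.symm
  apply Equiv.ext
  intro i
  apply Fin.ext
  simpa using (heq i (Finset.mem_univ i)).symm

lemma SIGN : ∀ (n : ℕ) (π : Equiv.Perm (Fin n)) (d : ℕ),
    (∀ i j : Fin n, d ≤ (i:ℕ) → i < j → π i < π j) →
    (∀ i j : Fin n, (j:ℕ) < d → i < j → π j < π i) →
    Equiv.Perm.sign π = (-1)^(∑ i : Fin n, if (i:ℕ) < d then (π i : ℕ) else 0) := by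
  intro n
  induction n with
  | zero =>
    intro π d _ _
    have : π = 1 := Subsingleton.elim π 1
    simp [this]
  | succ m ih =>
    intro π d hmono hanti
    rcases Nat.eq_zero_or_pos d with rfl | hd
    · have : π = 1 := perm_strictMono_eq_one π (fun i j hij => hmono i j (Nat.zero_le _) hij)
      simp [this]
    · set c : Fin (m+1) := π 0 with hc
      set τ : Equiv.Perm (Fin (m+1)) := Fin.cycleRange c * π with hτ
      have hτ0 : τ 0 = 0 := by
        rw [hτ]; simp only [Equiv.Perm.mul_apply, ← hc]; exact Fin.cycleRange_self c
      set p : Fin (m+1) := (Equiv.Perm.decomposeFin τ).1 with hpdef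
      set e : Equiv.Perm (Fin m) := (Equiv.Perm.decomposeFin τ).2 with hedef
      have hτd : τ = Equiv.Perm.decomposeFin.symm (p, e) := by
        rw [hpdef, hedef]
        exact (Equiv.symm_apply_apply Equiv.Perm.decomposeFin τ).symm
      have hp : p = 0 := by
        have h0 := Equiv.Perm.decomposeFin_symm_apply_zero p e
        rw [← hτd] at h0
        rw [← h0, hτ0]
      have hτs : ∀ x : Fin m, (e x).succ = Fin.cycleRange c (π x.succ) := by
        intro x
        have h1 := Equiv.Perm.decomposeFin_symm_apply_succ e p x
        rw [← hτd, hp] at h1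
        rw [Equiv.swap_self, Equiv.refl_apply] at h1
        rw [← h1, hτ]
        rfl
      have hne : ∀ x : Fin m, π x.succ ≠ c := by
        intro x hx
        exact Fin.succ_ne_zero x (π.injective (hx.trans hc))
      have hlt : ∀ {x y : Fin m}, π x.succ < π y.succ → e x < e y := by
        intro x y hxy
        have := cycleRange_lt_iff c (hne x) (hne y) hxy
        rw [← hτs x, ← hτs y] at this
        exact Fin.succ_lt_succ_iff.mp this
      have hmono' : ∀ i j : Fin m, d - 1 ≤ (i:ℕ) → i < j → e i < e j := by
        intro i j hi hij
        exact hlt (hmono i.succ j.succ (by simp [Fin.val_succ]; omega)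
          (Fin.succ_lt_succ_iff.mpr hij))
      have hanti' : ∀ i j : Fin m, (j:ℕ) < d - 1 → i < j → e j < e i := by
        intro i j hj hij
        exact hlt (hanti i.succ j.succ (by simp [Fin.val_succ]; omega)
          (Fin.succ_lt_succ_iff.mpr hij))
      have hse := ih e (d-1) hmono' hanti'
      have hπ : π = (Fin.cycleRange c)⁻¹ * τ := by
        rw [hτ]
        group
      have hsτ : Equiv.Perm.sign τ = Equiv.Perm.sign e := by
        rw [hτd, Equiv.Perm.decomposeFin.symm_sign, hp, if_pos rfl, one_mul]
      have hsπ : Equiv.Perm.sign π = (-1)^(c:ℕ) * Equiv.Perm.sign e := by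
        rw [hπ, map_mul, map_inv, Fin.sign_cycleRange, hsτ]
        congr 1
      -- identify the values
      have hval : ∀ x : Fin m, (x:ℕ) < d - 1 → (e x : ℕ) = (π x.succ : ℕ) := by
        intro x hx
        have hlt0 : π x.succ < c := by
          rw [hc]
          exact hanti 0 x.succ (by simp [Fin.val_succ]; omega) (Fin.succ_pos x)
        have h1 : ((e x).succ : ℕ) = (π x.succ : ℕ) + 1 := by
          rw [hτs x]
          exact Fin.coe_cycleRange_of_lt hlt0
        simp only [Fin.val_succ] at h1
        omega
      have hsum : (∑ i : Fin (m+1), if (i:ℕ) < d then (π i : ℕ) else 0)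
          = (c:ℕ) + ∑ x : Fin m, (if (x:ℕ) < d - 1 then (e x : ℕ) else 0) := by
        rw [Fin.sum_univ_succ]
        simp only [Fin.val_zero, Fin.val_succ]
        rw [hc]
        congr 1
        · exact if_pos hd
        apply Finset.sum_congr rfl
        intro x _
        by_cases hx : (x:ℕ) < d - 1
        · rw [if_pos (by omega), if_pos hx, hval x hx]
        · rw [if_neg (by omega), if_neg hx]
      rw [hsum, hsπ, hse, pow_add]

lemma DC (s : Finset ℕ) (h : ∀ a b : ℕ, a ≤ b → b ∈ s → a ∈ s) : s = Finset.range s.card := by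
  induction s using Finset.strongInduction with
  | _ s ih =>
    rcases s.eq_empty_or_nonempty with rfl | hne
    · simp
    · set M := s.max' hne with hM
      have hMs : M ∈ s := s.max'_mem hne
      set s' := s.erase M with hs'
      have hsub : s' ⊂ s := Finset.erase_ssubset hMs
      have h' : ∀ a b : ℕ, a ≤ b → b ∈ s' → a ∈ s' := by
        intro a b hab hb
        have hbs : b ∈ s := Finset.mem_of_mem_erase hb
        have hbM : b ≠ M := Finset.ne_of_mem_erase hb
        have hbM' : b < M := lt_of_le_of_ne (s.le_max' b hbs) hbM
        exact Finset.mem_erase.mpr ⟨by omega, h a b hab hbs⟩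
      have hrec := ih s' hsub h'
      set c := s'.card with hc
      have hMc : M = c := by
        by_contra hne'
        have hMge : c ≤ M := by
          by_contra hlt
          have : M ∈ s' := by rw [hrec]; exact Finset.mem_range.mpr (by omega)
          exact (Finset.ne_of_mem_erase this) rfl
        have hcM : c < M := by omega
        have hcs : c ∈ s := h c M (by omega) hMs
        have : c ∈ s' := Finset.mem_erase.mpr ⟨by omega, hcs⟩
        rw [hrec] at this
        exact absurd (Finset.mem_range.mp this) (lt_irrefl c)
      have hins : s = insert M s' := (Finset.insert_erase hMs).symm
      have hcard : s.card = c + 1 := by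
        rw [hins, Finset.card_insert_of_notMem (Finset.notMem_erase M s)]
      rw [hcard, hins, hrec, hMc, Finset.range_add_one]

lemma conj_lt_iff (μ : ℕ → ℕ) (k : ℕ) (hk : ∀ i, k ≤ i → μ i = 0) (hμ : Antitone μ)
    (j i : ℕ) : i < conjP μ j ↔ j < μ i := by
  classical
  set s : Finset ℕ := (Finset.range k).filter (fun t => j < μ t) with hs
  have hset : {t : ℕ | j < μ t} = ↑s := by
    ext t
    simp only [Set.mem_setOf_eq, hs, Finset.coe_filter, Finset.mem_range, Set.mem_setOf_eq]
    constructor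
    · intro ht
      refine ⟨?_, ht⟩
      by_contra hc
      rw [hk t (by omega)] at ht
      omega
    · exact fun ht => ht.2
  have hcard : conjP μ j = s.card := by
    have h1 : conjP μ j = Nat.card ({t : ℕ | j < μ t} : Set ℕ) := rfl
    rw [h1, Nat.card_coe_set_eq, hset, Set.ncard_coe_finset]
  have hdc : ∀ a b : ℕ, a ≤ b → b ∈ s → a ∈ s := by
    intro a b hab hb
    simp only [hs, Finset.mem_filter, Finset.mem_range] at *
    exact ⟨by omega, lt_of_lt_of_le hb.2 (hμ hab)⟩
  have := DC s hdc
  rw [hcard]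
  constructor
  · intro hi
    have : i ∈ s := by rw [this]; exact Finset.mem_range.mpr hi
    exact (Finset.mem_filter.mp this).2
  · intro hi
    have hik : i < k := by
      by_contra hc
      rw [hk i (by omega)] at hi
      omega
    have hmem : i ∈ s := Finset.mem_filter.mpr ⟨Finset.mem_range.mpr hik, hi⟩
    rw [this] at hmem
    exact Finset.mem_range.mp hmem

lemma BLOCK {n : ℕ} (d : ℕ) (hd : d ≤ n) (M : Matrix (Fin n) (Fin n) SymFn)
    (σ : Equiv.Perm (Fin n))
    (h : ∀ i : Fin n, d ≤ (i:ℕ) → ∀ j, M i j = if j = σ i then 1 else 0) :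
    (Equiv.Perm.sign σ : SymFn) * M.det =
      Matrix.det (Matrix.of fun i j : Fin d => M (Fin.castLE hd i) (σ (Fin.castLE hd j))) := by
  rw [← Matrix.det_permute' σ M]
  have hN : ∀ i : Fin n, d ≤ (i:ℕ) → ∀ j, (M.submatrix id σ) i j = if j = i then 1 else 0 := by
    intro i hi j
    show M i (σ j) = _
    rw [h i hi (σ j)]
    simp
  exact DETU n d hd (M.submatrix id σ) hN

lemma schur_stab (μ : ℕ → ℕ) (m : ℕ) (hm : ∀ i, m ≤ i → μ i = 0) :
    ∀ k, m ≤ k → schur μ k = schur μ m := by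
  intro k
  induction k with
  | zero => intro h; rw [Nat.le_zero.mp h]
  | succ t iht =>
    intro h
    rcases Nat.lt_or_ge m (t+1) with hlt | hge
    · have hmt : m ≤ t := by omega
      rw [← iht hmt]
      show Matrix.det _ = Matrix.det _
      rw [Matrix.det_succ_row _ (Fin.last t)]
      rw [Finset.sum_eq_single (Fin.last t)]
      · have hz : μ t = 0 := hm t hmt
        have h1 : (Matrix.of fun i j : Fin (t+1) => hh ((μ i : ℤ) - i + j)) (Fin.last t) (Fin.last t) = 1 := by
          simp only [Matrix.of_apply, Fin.val_last, hz, Nat.cast_zero]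
          rw [show (0:ℤ) - t + t = 0 by ring, hh_zero]
        rw [h1, Fin.succAbove_last]
        have h2 : (-1:SymFn) ^ ((Fin.last t : ℕ) + (Fin.last t : ℕ)) = 1 := by
          rw [Fin.val_last]; exact Even.neg_one_pow ⟨t, rfl⟩
        rw [h2, one_mul, one_mul]
        congr 1
      · intro j _ hj
        have hz : μ t = 0 := hm t hmt
        have h1 : (Matrix.of fun i j : Fin (t+1) => hh ((μ i : ℤ) - i + j)) (Fin.last t) j = 0 := by
          simp only [Matrix.of_apply, Fin.val_last, hz, Nat.cast_zero]
          apply hh_neg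
          have : (j:ℕ) < t := by
            have := j.isLt
            have : (j:ℕ) ≠ t := fun hc => hj (Fin.ext (by simp [Fin.val_last, hc]))
            omega
          omega
        rw [h1]
        ring
      · intro hmem
        exact absurd (Finset.mem_univ _) hmem
    · have : m = t+1 := by omega
      rw [this]

lemma hook_sigma (c : ℕ) (i j : Fin (c+1)) (hi : 1 ≤ (i:ℕ)) :
    (j = (Fin.cycleRange (Fin.last c))⁻¹ i) ↔ ((j:ℕ) + 1 = (i:ℕ)) := by
  rw [eq_comm, Equiv.Perm.inv_eq_iff_eq, eq_comm]
  constructor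
  · intro h
    rcases Nat.lt_or_ge (j:ℕ) c with hj | hj
    · rw [Fin.cycleRange_of_lt (by rw [Fin.lt_def, Fin.val_last]; exact hj)] at h
      rw [← h, Fin.val_add_one_of_lt (by rw [Fin.lt_def, Fin.val_last]; exact hj)]
    · have : j = Fin.last c := Fin.ext (by rw [Fin.val_last]; have := j.isLt; omega)
      rw [this, Fin.cycleRange_self] at h
      rw [← h] at hi
      simp at hi
  · intro h
    have hj : (j:ℕ) < c := by have := i.isLt; omega
    rw [Fin.cycleRange_of_lt (by rw [Fin.lt_def, Fin.val_last]; exact hj)]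
    apply Fin.ext
    rw [Fin.val_add_one_of_lt (by rw [Fin.lt_def, Fin.val_last]; exact hj)]
    exact h

lemma KEY (p c : ℕ) : Sc ((p:ℤ)+1+c) c = (-1:SymFn)^c * schur (hookP p c) (c+1) := by
  set σc : Equiv.Perm (Fin (c+1)) := (Fin.cycleRange (Fin.last c))⁻¹ with hσc
  set Mh : Matrix (Fin (c+1)) (Fin (c+1)) SymFn :=
    Matrix.of fun i j : Fin (c+1) => hh ((hookP p c i : ℤ) - i + j) with hMh
  have h1 : schur (hookP p c) (c+1) = Mh.det := rfl
  have h2 : Mh.det = (Mh * TT (c+1)).det := by rw [Matrix.det_mul, det_TT, mul_one]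
  have hR : ∀ i j, (Mh * TT (c+1)) i j = Sc ((hookP p c i : ℤ) - i + j) j := by
    intro i j
    simp only [Matrix.mul_apply, hMh, Matrix.of_apply]
    exact mulrow ((hookP p c (i:ℕ) : ℤ) - (i:ℕ)) j
  have hcond : ∀ i : Fin (c+1), 1 ≤ (i:ℕ) → ∀ j, (Mh * TT (c+1)) i j = if j = σc i then 1 else 0 := by
    intro i hi j
    rw [hR i j]
    have hhook : hookP p c (i:ℕ) = 1 := by
      rw [hookP]
      rw [if_neg (by omega), if_pos (by have := i.isLt; omega)]
    rw [hhook]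
    rw [Sc_delta (by push_cast; omega)]
    have hiff := hook_sigma c i j hi
    by_cases hc : (j:ℕ)+1 = (i:ℕ)
    · rw [if_pos (by push_cast; omega), if_pos (hiff.mpr hc)]
    · rw [if_neg (by intro hcc; apply hc; push_cast at hcc; omega),
        if_neg (fun h => hc (hiff.mp h))]
  have hblock := BLOCK 1 (by omega) (Mh * TT (c+1)) σc hcond
  have hsign : (Equiv.Perm.sign σc : SymFn) = (-1:SymFn)^c := by
    have : Equiv.Perm.sign σc = (-1:ℤˣ)^c := by
      rw [hσc, map_inv, Fin.sign_cycleRange, Fin.val_last, ← inv_pow]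
      norm_num
    rw [this]
    push_cast
    norm_num
  have hs0 : σc (Fin.castLE (by omega : 1 ≤ c+1) (0 : Fin 1)) = Fin.last c := by
    rw [hσc, Equiv.Perm.inv_eq_iff_eq]
    have : Fin.castLE (by omega : 1 ≤ c+1) (0 : Fin 1) = (0 : Fin (c+1)) := rfl
    rw [this, Fin.cycleRange_self]
  rw [Matrix.det_fin_one] at hblock
  simp only [Matrix.of_apply] at hblock
  rw [hs0, hR] at hblock
  have hentry : ((hookP p c ((Fin.castLE (by omega : 1 ≤ c+1) (0:Fin 1)) : ℕ) : ℤ)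
      - ((Fin.castLE (by omega : 1 ≤ c+1) (0:Fin 1)) : ℕ) + ((Fin.last c : ℕ))) = (p:ℤ)+1+c := by
    have h0 : ((Fin.castLE (by omega : 1 ≤ c+1) (0:Fin 1)) : ℕ) = 0 := rfl
    rw [h0, Fin.val_last, hookP]
    simp
  rw [hentry, Fin.val_last] at hblock
  rw [← hblock, hsign, ← h2, ← h1]

/-- **Giambelli formula**: for any partition `μ` with Frobenius coordinates
`(p_1,…,p_d | q_1,…,q_d)` (0-indexed: `p i = μ i - (i+1)`, `q j = μ' j - (j+1)`
for `i, j < d`, where `d` is the number of diagonal boxes),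
`s_μ = det [ s_{(p_i | q_j)} ]_{i,j=1}^d`. -/
theorem giambelli_schur (μ : ℕ → ℕ) (hμ : Antitone μ)
    (k : ℕ) (hk : ∀ i, k ≤ i → μ i = 0)
    (d : ℕ) (hd : ∀ i, i < d ↔ i < μ i) :
    schur μ k =
      Matrix.det (Matrix.of fun i j : Fin d =>
        schur (hookP (μ i - (i + 1)) (conjP μ j - (j + 1))) (conjP μ (j : ℕ) - (j : ℕ))) := by
  have hiff : ∀ j i, i < conjP μ j ↔ j < μ i := conj_lt_iff μ k hk hμ
  set n := conjP μ 0 with hn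
  have hnk : n ≤ k := by
    by_contra hc
    have h1 := (hiff 0 k).mp (by omega)
    rw [hk k (le_refl k)] at h1
    omega
  have hzn : ∀ i, n ≤ i → μ i = 0 := by
    intro i hi
    have h1 := hiff 0 i
    omega
  have hlow : ∀ i, i < n → 1 ≤ μ i := by
    intro i hi
    have h1 := (hiff 0 i).mp hi
    omega
  have hdn : d ≤ n := by
    rcases Nat.eq_zero_or_pos d with rfl | hdpos
    · omega
    · have h1 := (hd (d-1)).mp (by omega)
      have h2 := hiff 0 (d-1)
      omega
  have hconj_ge : ∀ j, j < d → j + 1 ≤ conjP μ j := by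
    intro j hj
    have h1 := hiff j j
    have h2 := (hd j).mp hj
    omega
  have hconj_le : ∀ j, conjP μ j ≤ n := by
    intro j
    by_contra hc
    have h1 := (hiff j n).mp (by omega)
    have h2 := hzn n (le_refl n)
    omega
  have hμle : ∀ x, d ≤ x → μ x ≤ x := by
    intro x hx
    have := hd x
    omega
  set Q : ℕ → ℕ := fun j => conjP μ j - (j+1) with hQ
  have hQanti : ∀ j j', j < j' → j' < d → Q j' < Q j := by
    intro j j' hjj hj'
    have hmc : conjP μ j' ≤ conjP μ j := by
      by_contra hc
      have h1 := (hiff j' (conjP μ j)).mp (by omega)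
      have h2 := hiff j (conjP μ j)
      omega
    have h3 := hconj_ge j' hj'
    have h4 := hconj_ge j (by omega)
    simp only [hQ]
    omega
  have hkey : ∀ (j x : ℕ), j < d → d ≤ x → Q j ≠ x - μ x := by
    intro j x hj hx hne
    have h1 := hconj_ge j hj
    have h2 := hiff j x
    have h3 := hμle x hx
    simp only [hQ] at hne
    omega
  set f : Fin n → Fin n := fun x =>
    if h : (x:ℕ) < d then ⟨Q x, by have := hconj_ge x h; have := hconj_le x; simp only [hQ]; omega⟩
    else ⟨(x:ℕ) - μ x, by have := x.isLt; omega⟩ with hf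
  have hinj : Function.Injective f := by
    intro x y hxy
    simp only [hf] at hxy
    by_cases hx : (x:ℕ) < d <;> by_cases hy : (y:ℕ) < d
    · rw [dif_pos hx, dif_pos hy, Fin.mk.injEq] at hxy
      apply Fin.ext
      by_contra hc
      rcases Nat.lt_or_ge (x:ℕ) (y:ℕ) with h | h
      · exact absurd hxy.symm (Nat.ne_of_lt (hQanti x y h hy))
      · have h' : (y:ℕ) < (x:ℕ) := by omega
        exact absurd hxy (Nat.ne_of_lt (hQanti y x h' hx))
    · rw [dif_pos hx, dif_neg hy, Fin.mk.injEq] at hxy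
      exact absurd hxy (hkey x y hx (by omega))
    · rw [dif_neg hx, dif_pos hy, Fin.mk.injEq] at hxy
      exact absurd hxy.symm (hkey y x hy (by omega))
    · rw [dif_neg hx, dif_neg hy, Fin.mk.injEq] at hxy
      apply Fin.ext
      have h1 := hμle x (by omega)
      have h2 := hμle y (by omega)
      rcases Nat.lt_or_ge (x:ℕ) (y:ℕ) with h | h
      · have := hμ (le_of_lt h)
        omega
      · rcases Nat.lt_or_ge (y:ℕ) (x:ℕ) with h' | h'
        · have := hμ (le_of_lt h')
          omega
        · omega
  set π : Equiv.Perm (Fin n) := Equiv.ofBijective f (Finite.injective_iff_bijective.mp hinj)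
    with hπdef
  have hπ : ∀ x, π x = f x := fun x => rfl
  have hπv1 : ∀ x : Fin n, (x:ℕ) < d → ((π x):ℕ) = Q x := by
    intro x hx
    rw [hπ, hf]
    simp only [dif_pos hx]
  have hπv2 : ∀ x : Fin n, d ≤ (x:ℕ) → ((π x):ℕ) = (x:ℕ) - μ x := by
    intro x hx
    rw [hπ, hf]
    simp only [dif_neg (by omega : ¬ (x:ℕ) < d)]
  -- matrices
  set Mμ : Matrix (Fin n) (Fin n) SymFn :=
    Matrix.of fun i j : Fin n => hh ((μ i : ℤ) - i + j) with hMμ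
  have hsn : schur μ n = Mμ.det := rfl
  have hdet : Mμ.det = (Mμ * TT n).det := by rw [Matrix.det_mul, det_TT, mul_one]
  have hSij : ∀ i j, (Mμ * TT n) i j = Sc ((μ i:ℤ) - i + j) j := by
    intro i j
    simp only [Matrix.mul_apply, hMμ, Matrix.of_apply]
    exact mulrow ((μ (i:ℕ) : ℤ) - (i:ℕ)) j
  have hcond : ∀ i : Fin n, d ≤ (i:ℕ) → ∀ j, (Mμ * TT n) i j = if j = π i then 1 else 0 := by
    intro i hi j
    rw [hSij]
    have h3 := hμle i hi
    rw [Sc_delta (by push_cast; omega)]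
    have hπi := hπv2 i hi
    by_cases hc : (j:ℕ) = (i:ℕ) - μ i
    · rw [if_pos (by push_cast; omega), if_pos (Fin.ext (by omega))]
    · rw [if_neg (by intro hcc; apply hc; push_cast at hcc; omega),
        if_neg (by intro hcc; apply hc; rw [hcc, hπi])]
  have hblock := BLOCK d hdn (Mμ * TT n) π hcond
  -- the entries of the small matrix
  have hA : ∀ (i j : Fin d), (Mμ * TT n) (Fin.castLE hdn i) (π (Fin.castLE hdn j)) =
      (-1:SymFn)^(Q (j:ℕ)) * schur (hookP (μ i - ((i:ℕ)+1)) (Q (j:ℕ))) (Q (j:ℕ) + 1) := by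
    intro i j
    rw [hSij]
    have hπj : ((π (Fin.castLE hdn j)):ℕ) = Q (j:ℕ) := hπv1 (Fin.castLE hdn j) j.isLt
    have hpi : (i:ℕ)+1 ≤ μ (i:ℕ) := (hd (i:ℕ)).mp i.isLt
    have harg : ((μ ((Fin.castLE hdn i):ℕ) : ℤ) - ((Fin.castLE hdn i):ℕ)
        + ((π (Fin.castLE hdn j)):ℕ)) = ((μ (i:ℕ) - ((i:ℕ)+1) : ℕ) : ℤ) + 1 + (Q (j:ℕ)) := by
      rw [hπj]
      have : ((Fin.castLE hdn i):ℕ) = (i:ℕ) := rfl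
      rw [this]
      push_cast [hpi]
      omega
    rw [harg, hπj, KEY]
  -- sign computation
  have hmono : ∀ i j : Fin n, d ≤ (i:ℕ) → i < j → π i < π j := by
    intro i j hi hij
    have hij' := Fin.lt_def.mp hij
    rw [Fin.lt_def, hπv2 i hi, hπv2 j (by omega)]
    have h1 := hμle i hi
    have h2 := hμle j (by omega)
    have h3 := hμ (le_of_lt hij' : (i:ℕ) ≤ (j:ℕ))
    omega
  have hanti : ∀ i j : Fin n, (j:ℕ) < d → i < j → π j < π i := by
    intro i j hj hij
    have hij' := Fin.lt_def.mp hij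
    rw [Fin.lt_def, hπv1 i (by omega), hπv1 j hj]
    exact hQanti i j hij' hj
  have hsign := SIGN n π d hmono hanti
  have hsum : (∑ i : Fin n, if (i:ℕ) < d then ((π i):ℕ) else 0) = ∑ j : Fin d, Q (j:ℕ) := by
    have e1 : (∑ i : Fin n, if (i:ℕ) < d then ((π i):ℕ) else 0)
        = ∑ i : Fin n, (fun x => if x < d then Q x else 0) (i:ℕ) := by
      apply Finset.sum_congr rfl
      intro i _
      by_cases hx : (i:ℕ) < d
      · simp only [if_pos hx, hπv1 i hx]
      · simp only [if_neg hx]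
    rw [e1]
    rw [show (∑ j : Fin d, Q (j:ℕ)) = ∑ x ∈ Finset.range d, Q x from
      Fin.sum_univ_eq_sum_range (fun x => Q x) d]
    rw [Fin.sum_univ_eq_sum_range (fun x => if x < d then Q x else 0) n]
    have e2 := Finset.sum_subset (Finset.range_subset_range.mpr hdn)
      (f := fun x => if x < d then Q x else 0)
      (fun x _ hx => by
        show (if x < d then Q x else 0) = 0
        rw [if_neg (by simpa using hx)])
    rw [← e2]
    apply Finset.sum_congr rfl
    intro x hx
    show (if x < d then Q x else 0) = Q x
    rw [if_pos (Finset.mem_range.mp hx)]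
  have hprod : (∏ j : Fin d, (-1:SymFn)^(Q (j:ℕ))) = (-1:SymFn)^(∑ j : Fin d, Q (j:ℕ)) :=
    Finset.prod_pow_eq_pow_sum _ _ _
  have hdetA : Matrix.det (Matrix.of fun i j : Fin d =>
        (Mμ * TT n) (Fin.castLE hdn i) (π (Fin.castLE hdn j)))
      = (-1:SymFn)^(∑ j : Fin d, Q (j:ℕ)) * Matrix.det (Matrix.of fun i j : Fin d =>
          schur (hookP (μ i - ((i:ℕ)+1)) (Q (j:ℕ))) (Q (j:ℕ)+1)) := by
    have e3 : (Matrix.of fun i j : Fin d => (Mμ * TT n) (Fin.castLE hdn i) (π (Fin.castLE hdn j)))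
        = Matrix.of (fun i j : Fin d => ((-1:SymFn)^(Q (j:ℕ))) *
            ((Matrix.of fun i j : Fin d =>
              schur (hookP (μ i - ((i:ℕ)+1)) (Q (j:ℕ))) (Q (j:ℕ)+1)) i j)) := by
      refine Matrix.ext fun i j => ?_
      simp only [Matrix.of_apply]
      exact hA i j
    rw [e3, Matrix.det_mul_row (fun j : Fin d => (-1:SymFn)^(Q (j:ℕ))) _, hprod]
  have hsgn : (Equiv.Perm.sign π : SymFn) = (-1:SymFn)^(∑ j : Fin d, Q (j:ℕ)) := by
    rw [hsign, hsum]
    push_cast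
    norm_num
  have hfinal : (Matrix.of fun i j : Fin d => schur (hookP (μ i - ((i:ℕ)+1)) (Q (j:ℕ))) (Q (j:ℕ)+1))
      = Matrix.of (fun i j : Fin d =>
          schur (hookP (μ i - ((i:ℕ) + 1)) (conjP μ j - ((j:ℕ) + 1))) (conjP μ (j:ℕ) - (j:ℕ))) := by
    refine Matrix.ext fun i j => ?_
    have h1 := hconj_ge (j:ℕ) j.isLt
    simp only [Matrix.of_apply, hQ]
    congr 1
    omega
  have hstab := schur_stab μ n hzn k hnk
  rw [hstab, hsn, hdet]
  apply mul_left_cancel₀ (a := (-1:SymFn)^(∑ j : Fin d, Q (j:ℕ))) (pow_ne_zero _ (by norm_num))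
  calc (-1:SymFn)^(∑ j : Fin d, Q (j:ℕ)) * (Mμ * TT n).det
      = (Equiv.Perm.sign π : SymFn) * (Mμ * TT n).det := by rw [hsgn]
    _ = Matrix.det (Matrix.of fun i j : Fin d =>
          (Mμ * TT n) (Fin.castLE hdn i) (π (Fin.castLE hdn j))) := hblock
    _ = (-1:SymFn)^(∑ j : Fin d, Q (j:ℕ)) * Matrix.det (Matrix.of fun i j : Fin d =>
          schur (hookP (μ i - ((i:ℕ)+1)) (Q (j:ℕ))) (Q (j:ℕ)+1)) := hdetA
    _ = (-1:SymFn)^(∑ j : Fin d, Q (j:ℕ)) * Matrix.det (Matrix.of fun i j : Fin d =>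
          schur (hookP (μ i - ((i:ℕ) + 1)) (conjP μ j - ((j:ℕ) + 1))) (conjP μ (j:ℕ) - (j:ℕ))) := by
        rw [hfinal]
end
end

section
/- Let ⟨·⟩ : Λ → ℂ be linear with ⟨1⟩ = 1, and suppose that for two d×d matrices A, B of elements where B has scalar (constant) entries, ⟨det A_{IJ}⟩ = det⟨A_{IJ}⟩ holds for every pair of equal-size subsets I, J ⊆ {1,…,d} (where A_{IJ} is the submatrix of A with rows I and columns J, and ⟨·⟩ is applied entrywise). Then ⟨det(A+B)⟩ = det⟨A+B⟩. -/
/-!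
STATEMENT 3: if a unital linear functional `⟨·⟩ : R → ℂ` satisfies
`⟨det A_{IJ}⟩ = det ⟨A_{IJ}⟩` for all equal-size minors of a matrix `A`,
and `B` is a matrix with scalar entries, then `⟨det(A+B)⟩ = det⟨A+B⟩`.
Submatrices with rows `I` and columns `J` (subsets of equal size `m`) are
encoded by strictly monotone maps `r, c : Fin m → Fin d`.
-/

open Matrix Finset

/-- Key lemma: if all rows outside `S` of `M` are scalar, and `φ` commutes with
determinants of all submatrices whose rows lie in `S`, then `φ (det M) = det (M.map φ)`. -/
lemma aux_det_scalar_rows {R : Type*} [CommRing R] [Algebra ℂ R]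
    (φ : R →ₗ[ℂ] ℂ) (hφ1 : φ 1 = 1) :
    ∀ (n : ℕ) (M : Matrix (Fin n) (Fin n) R) (S : Finset (Fin n)),
    (∀ i ∉ S, ∀ j, ∃ b : ℂ, M i j = algebraMap ℂ R b) →
    (∀ (m : ℕ) (r c : Fin m → Fin n), StrictMono r → StrictMono c → (∀ k, r k ∈ S) →
      φ (Matrix.det (M.submatrix r c)) = Matrix.det ((M.submatrix r c).map φ)) →
    φ (Matrix.det M) = Matrix.det (M.map φ) := by
  intro n
  induction n with
  | zero =>
      intro M S _ _
      simp [Matrix.det_fin_zero, hφ1]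
  | succ n ih =>
      intro M S hscal hmin
      by_cases hS : S = Finset.univ
      · have := hmin (n + 1) id id strictMono_id strictMono_id (by simp [hS])
        simpa using this
      · obtain ⟨i, hi⟩ : ∃ i, i ∉ S := by
          by_contra h
          push_neg at h
          exact hS (Finset.eq_univ_iff_forall.2 h)
        rw [Matrix.det_succ_row M i, map_sum, Matrix.det_succ_row (M.map φ) i]
        refine Finset.sum_congr rfl fun j _ => ?_
        obtain ⟨b, hb⟩ := hscal i hi j
        set M' := M.submatrix i.succAbove j.succAbove with hM'
        have hIH : φ (Matrix.det M') = Matrix.det (M'.map φ) := by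
          refine ih M' (Finset.univ.filter fun k => i.succAbove k ∈ S) ?_ ?_
          · intro k hk l
            simp only [Finset.mem_filter, Finset.mem_univ, true_and] at hk
            exact hscal _ hk _
          · intro m r c hr hc hrS
            have hrS' : ∀ k, i.succAbove (r k) ∈ S := fun k => by
              have := hrS k
              simp only [Finset.mem_filter, Finset.mem_univ, true_and] at this
              exact this
            rw [hM', Matrix.submatrix_submatrix]
            exact hmin m _ _ ((Fin.strictMono_succAbove i).comp hr)
              ((Fin.strictMono_succAbove j).comp hc) hrS'
        have hcoeff : ((-1 : R) ^ (i + j : ℕ) * M i j * Matrix.det M')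
            = (((-1 : ℂ) ^ (i + j : ℕ) * b)) • Matrix.det M' := by
          rw [hb, Algebra.smul_def]
          push_cast [_root_.map_mul, map_pow]
          ring
        rw [hcoeff, LinearMap.map_smul, smul_eq_mul, hIH]
        have hMij : (M.map φ) i j = b := by
          simp [Matrix.map_apply, hb, Algebra.algebraMap_eq_smul_one, _root_.map_smul, hφ1]
        rw [hMij, Matrix.submatrix_map]

theorem det_average_add_scalar_matrix
    {R : Type*} [CommRing R] [Algebra ℂ R]
    (φ : R →ₗ[ℂ] ℂ) (hφ1 : φ 1 = 1)
    (d : ℕ) (A : Matrix (Fin d) (Fin d) R) (B : Matrix (Fin d) (Fin d) ℂ)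
    (hminors : ∀ (m : ℕ) (r c : Fin m → Fin d), StrictMono r → StrictMono c →
      φ (Matrix.det (A.submatrix r c)) = Matrix.det ((A.submatrix r c).map φ)) :
    φ (Matrix.det (A + B.map (algebraMap ℂ R))) =
      Matrix.det ((A + B.map (algebraMap ℂ R)).map φ) := by
  set B' := B.map (algebraMap ℂ R) with hB'
  have hdet1 : Matrix.det (A + B') =
      ∑ s : Finset (Fin d), Matrix.det (Matrix.of (s.piecewise A B')) := by
    have := (Matrix.detRowAlternating (R := R) (n := Fin d)).toMultilinearMap.map_add_univ
      (A : Fin d → Fin d → R) (B' : Fin d → Fin d → R)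
    exact this
  have hmapadd : (A + B').map φ = A.map φ + B'.map φ := by
    ext i j; simp [Matrix.map_apply]
  have hdet2 : Matrix.det ((A + B').map φ) =
      ∑ s : Finset (Fin d), Matrix.det (Matrix.of (s.piecewise (A.map φ) (B'.map φ))) := by
    rw [hmapadd]
    have := (Matrix.detRowAlternating (R := ℂ) (n := Fin d)).toMultilinearMap.map_add_univ
      (A.map φ : Fin d → Fin d → ℂ) (B'.map φ : Fin d → Fin d → ℂ)
    exact this
  rw [hdet1, map_sum, hdet2]
  refine Finset.sum_congr rfl fun s _ => ?_
  have hpiece : (Matrix.of (s.piecewise A B')).map φ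
      = Matrix.of (s.piecewise (A.map φ) (B'.map φ)) := by
    ext i j
    by_cases h : i ∈ s <;> simp [Matrix.map_apply, Finset.piecewise, h]
  rw [← hpiece]
  refine aux_det_scalar_rows φ hφ1 d (Matrix.of (s.piecewise A B')) s ?_ ?_
  · intro i hi j
    exact ⟨B i j, by simp [Finset.piecewise, hi, hB', Matrix.map_apply]⟩
  · intro m r c hr hc hrS
    have hsub : (Matrix.of (s.piecewise A B')).submatrix r c = A.submatrix r c := by
      ext k l
      simp [Matrix.submatrix_apply, Finset.piecewise, hrS k]
    rw [hsub]
    exact hminors m r c hr hc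
end

section
/- Fix N ≥ 1 and a measure α on ℝ with finite moments A_n = ∫ x^n dα(x). Define ⟨s_λ⟩ = const · det[A_{λ_i + 2N − i − j}]_{i,j=1}^N for partitions λ with at most N parts (with the normalizing constant chosen so that ⟨s_∅⟩ = 1), and ⟨s_λ⟩ = 0 if λ has more than N parts. Then this functional is Giambelli compatible: for every partition λ = (p_1,…,p_d | q_1,…,q_d), ⟨s_λ⟩ = det[⟨s_{(p_i|q_j)}⟩]_{i,j=1}^d. -/
/-!
STATEMENT 6: the functional of the N-point orthogonal polynomial ensemble,
⟨s_λ⟩ = const · det[A_{λ_i + 2N − i − j}]_{i,j=1}^N for ℓ(λ) ≤ N (and 0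
otherwise), where A_n = ∫ xⁿ dα are the moments of α, is Giambelli compatible.
Partitions are 0-indexed: with i,j running over Fin N the exponent
λ_i + 2N − i − j (1-indexed) becomes μ i + 2(N−1) − i − j.
-/

noncomputable section
open MeasureTheory

/-- The moments of the measure `α`. -/
def moment (α : Measure ℝ) (n : ℕ) : ℝ := ∫ x, x ^ n ∂α

/-- The orthogonal-polynomial-ensemble average of the Schur function `s_μ`:
`const · det[A_{μ_i + 2(N−1) − i − j}]` if `μ` has at most `N` parts, `0` otherwise. -/
def opeAvg (α : Measure ℝ) (N : ℕ) (c : ℝ) (μ : ℕ → ℕ) : ℝ :=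
  if μ N = 0 then
    c * Matrix.det (Matrix.of fun i j : Fin N =>
      moment α (μ i + 2 * (N - 1) - i - j))
  else 0

namespace GiambelliAux

open Equiv Matrix

variable {N : ℕ}

/-- the cycle `(a, a+1, ..., a+M)` sending `a+j ↦ a+j+1` (j < M) and `a+M ↦ a`. -/
def cyc (a : ℕ) : ℕ → Equiv.Perm (Fin N)
  | 0 => 1
  | m + 1 =>
    if h : a + m + 1 < N then
      cyc a m * Equiv.swap ⟨a + m, by omega⟩ ⟨a + m + 1, h⟩
    else cyc a m

lemma cyc_low {a : ℕ} (M : ℕ) (x : Fin N) (hx : (x : ℕ) < a) : cyc a M x = x := by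
  induction M with
  | zero => rfl
  | succ m ih =>
    rw [cyc]
    split
    · rw [Equiv.Perm.mul_apply, Equiv.swap_apply_of_ne_of_ne, ih]
      · intro h; apply absurd (congrArg Fin.val h); simp; omega
      · intro h; apply absurd (congrArg Fin.val h); simp; omega
    · exact ih

lemma cyc_high {a : ℕ} (M : ℕ) (x : Fin N) (hx : a + M < (x : ℕ)) : cyc a M x = x := by
  induction M with
  | zero => rfl
  | succ m ih =>
    rw [cyc]
    split
    · rw [Equiv.Perm.mul_apply, Equiv.swap_apply_of_ne_of_ne, ih]
      · omega
      · intro h; apply absurd (congrArg Fin.val h); simp; omega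
      · intro h; apply absurd (congrArg Fin.val h); simp; omega
    · exact ih (by omega)

lemma cyc_lt {a : ℕ} (M : ℕ) (j : ℕ) (hj : j < M) (h1 : a + j < N) (h2 : a + j + 1 < N) :
    cyc a M ⟨a + j, h1⟩ = ⟨a + j + 1, h2⟩ := by
  induction M with
  | zero => omega
  | succ m ih =>
    rw [cyc]
    split
    · rw [Equiv.Perm.mul_apply]
      rcases Nat.lt_or_ge j m with hjm | hjm
      · rw [Equiv.swap_apply_of_ne_of_ne, ih hjm]
        · intro h; apply absurd (congrArg Fin.val h); simp; omega
        · intro h; apply absurd (congrArg Fin.val h); simp; omega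
      · have hje : j = m := by omega
        subst hje
        have : Equiv.swap (⟨a + j, by omega⟩ : Fin N) ⟨a + j + 1, by omega⟩ ⟨a + j, h1⟩
            = ⟨a + j + 1, h2⟩ := by
          rw [show (⟨a + j, h1⟩ : Fin N) = ⟨a + j, by omega⟩ from rfl, Equiv.swap_apply_left]
        rw [this, cyc_high]
        simp
    · omega

lemma cyc_top {a : ℕ} (M : ℕ) (h1 : a + M < N) (h2 : a < N) :
    cyc a M ⟨a + M, h1⟩ = ⟨a, h2⟩ := by
  induction M with
  | zero => rfl
  | succ m ih =>
    rw [cyc]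
    split
    · rw [Equiv.Perm.mul_apply]
      have : Equiv.swap (⟨a + m, by omega⟩ : Fin N) ⟨a + m + 1, by omega⟩ ⟨a + (m+1), h1⟩
          = ⟨a + m, by omega⟩ := by
        rw [show (⟨a + (m+1), h1⟩ : Fin N) = ⟨a + m + 1, by omega⟩ from rfl, Equiv.swap_apply_right]
      rw [this, ih (by omega)]
    · omega

lemma sign_cyc {a : ℕ} (M : ℕ) (h : a + M < N) : Equiv.Perm.sign (cyc a M : Equiv.Perm (Fin N)) = (-1) ^ M := by
  induction M with
  | zero => simp [cyc]
  | succ m ih =>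
    rw [cyc, dif_pos (by omega : a + m + 1 < N), Equiv.Perm.sign_mul, ih (by omega),
      Equiv.Perm.sign_swap (by intro hh; apply absurd (congrArg Fin.val hh); simp)]
    rw [pow_succ]

lemma strictMono_perm_eq_one (f : Equiv.Perm (Fin N)) (hf : StrictMono (f : Fin N → Fin N)) :
    f = 1 := by
  have _ : WellFoundedLT (Fin N) := Finite.to_wellFoundedLT
  have h : (f : Fin N → Fin N) = (id : Fin N → Fin N) := by
    have h2 : StrictMono (id : Fin N → Fin N) := strictMono_id
    have h3 : Set.range (f : Fin N → Fin N) = Set.range (id : Fin N → Fin N) := by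
      rw [Set.range_id, f.surjective.range_eq]
    exact (StrictMono.range_inj hf h2).1 h3
  exact Equiv.ext fun i => congrFun h i

lemma sign_of_perm (d : ℕ) (q : ℕ → ℕ) (hq : ∀ s t, s < t → t < d → q t < q s)
    (hqN : ∀ s, s < d → q s < N) (π : Equiv.Perm (Fin N))
    (h1 : ∀ s : Fin N, (s : ℕ) < d → (π s : ℕ) = q s)
    (h2 : ∀ s t : Fin N, d ≤ (s : ℕ) → s < t → π s < π t) :
    Equiv.Perm.sign π = (-1) ^ (∑ s ∈ Finset.range d, q s) := by
  induction d generalizing π with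
  | zero =>
    have : π = 1 := strictMono_perm_eq_one π (by
      intro a b hab
      exact h2 a b (Nat.zero_le _) hab)
    simp [this]
  | succ d ih =>
    -- the minimal value `m = q d`
    set m := q d with hm
    have hmN : m < N := hqN d (Nat.lt_succ_self d)
    -- `d + m < N` since `q 0 ≥ m + d`
    have hq0 : ∀ i, i ≤ d → m + i ≤ q (d - i) := by
      intro i
      induction i with
      | zero => intro _; simp; omega
      | succ i ihi =>
        intro hi
        have h' := ihi (by omega)
        have := hq (d - (i+1)) (d - i) (by omega) (by omega)
        omega
    have hdm : d + m < N := by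
      have h00 := hq0 d le_rfl
      rw [Nat.sub_self] at h00
      have := hqN 0 (by omega)
      omega
    -- the values of `π` just after position `d` are `0, 1, ..., m-1`
    have claim : ∀ t (htm : t < m), (π ⟨d + 1 + t, by omega⟩ : ℕ) = t := by
      intro t
      induction t using Nat.strong_induction_on with
      | _ t iht =>
        intro htm
        have lower : t ≤ (π ⟨d + 1 + t, by omega⟩ : ℕ) := by
          rcases Nat.eq_zero_or_pos t with h0 | h0
          · omega
          · have e1 := iht (t-1) (by omega) (by omega)
            have e2 := h2 ⟨d + 1 + (t-1), by omega⟩ ⟨d + 1 + t, by omega⟩ (by simp)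
              (by simp [Fin.lt_iff_val_lt_val]; omega)
            rw [Fin.lt_iff_val_lt_val] at e2
            omega
        by_contra hcon
        have hgt : t < (π ⟨d + 1 + t, by omega⟩ : ℕ) := by omega
        set s₀ := π.symm ⟨t, by omega⟩ with hs₀
        have hps₀ : π s₀ = ⟨t, by omega⟩ := Equiv.apply_symm_apply π _
        have hval : (π s₀ : ℕ) = t := by rw [hps₀]
        rcases Nat.lt_or_ge (s₀ : ℕ) (d + 1) with hc1 | hc1
        · have := h1 s₀ hc1
          have hqs : m ≤ q (s₀ : ℕ) := by
            rcases Nat.lt_or_ge (s₀ : ℕ) d with hlt | hge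
            · exact le_of_lt (hq _ d hlt (Nat.lt_succ_self d))
            · have : (s₀ : ℕ) = d := by omega
              rw [this]
          omega
        · rcases Nat.lt_or_ge (s₀ : ℕ) (d + 1 + t) with hc2 | hc2
          · have hj := iht ((s₀ : ℕ) - d - 1) (by omega) (by omega)
            have : s₀ = ⟨d + 1 + ((s₀ : ℕ) - d - 1), by omega⟩ := by
              apply Fin.ext; simp; omega
            rw [this] at hval
            omega
          · rcases Nat.eq_or_lt_of_le hc2 with he | hlt
            · have : s₀ = ⟨d + 1 + t, by omega⟩ := by apply Fin.ext; simp; omega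
              rw [this] at hval
              omega
            · have := h2 ⟨d + 1 + t, by omega⟩ s₀ (by simp)
                (by rw [Fin.lt_iff_val_lt_val]; simp; omega)
              rw [Fin.lt_iff_val_lt_val] at this
              omega
    -- conjugating permutation
    set cc : Equiv.Perm (Fin N) := cyc d m with hcc
    set π' : Equiv.Perm (Fin N) := π * cc with hπ'
    have hπd : (π ⟨d, by omega⟩ : ℕ) = m := h1 ⟨d, by omega⟩ (by simp)
    -- values of π'
    have vA : ∀ (x : Fin N), d ≤ (x : ℕ) → (x : ℕ) < d + m →
        (π' x : ℕ) = (x : ℕ) - d := by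
      intro x hx1 hx2
      have hx : x = ⟨d + ((x : ℕ) - d), by omega⟩ := by apply Fin.ext; simp; omega
      rw [hπ', Equiv.Perm.mul_apply, hcc, hx,
        cyc_lt m ((x : ℕ) - d) (by omega) (by omega) (by omega)]
      have := claim ((x : ℕ) - d) (by omega)
      rw [show (⟨d + ((x:ℕ) - d) + 1, by omega⟩ : Fin N) = ⟨d + 1 + ((x:ℕ) - d), by omega⟩
        from Fin.ext (by simp; omega)]
      omega
    have vB : ∀ (x : Fin N), (x : ℕ) = d + m → (π' x : ℕ) = m := by
      intro x hx
      have hx' : x = ⟨d + m, by omega⟩ := Fin.ext (by simp [hx])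
      rw [hπ', Equiv.Perm.mul_apply, hcc, hx', cyc_top m (by omega) (by omega)]
      exact hπd
    have vC : ∀ (x : Fin N), d + m < (x : ℕ) → π' x = π x ∧ m < (π x : ℕ) := by
      intro x hx
      constructor
      · rw [hπ', Equiv.Perm.mul_apply, hcc, cyc_high m x hx]
      · have hne : (π x : ℕ) ≠ m := by
          intro he
          have : π x = π ⟨d, by omega⟩ := Fin.ext (by rw [hπd, he])
          have := π.injective this
          apply absurd (congrArg Fin.val this)
          simp; omega
        rcases Nat.eq_zero_or_pos m with h0 | h0
        · omega
        · have e1 := claim (m - 1) (by omega)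
          have e2 := h2 ⟨d + 1 + (m-1), by omega⟩ x (by simp)
            (by rw [Fin.lt_iff_val_lt_val]; simp; omega)
          rw [Fin.lt_iff_val_lt_val] at e2
          omega
    -- π' satisfies the inductive hypotheses for d
    have h1' : ∀ s : Fin N, (s : ℕ) < d → (π' s : ℕ) = q s := by
      intro s hs
      rw [hπ', Equiv.Perm.mul_apply, hcc, cyc_low m s hs]
      exact h1 s (by omega)
    have h2' : ∀ s t : Fin N, d ≤ (s : ℕ) → s < t → π' s < π' t := by
      intro s t hs hst
      rw [Fin.lt_iff_val_lt_val] at hst ⊢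
      rcases Nat.lt_or_ge (s : ℕ) (d + m) with hs2 | hs2
      · have es := vA s hs hs2
        rcases Nat.lt_or_ge (t : ℕ) (d + m) with ht2 | ht2
        · have et := vA t (by omega) ht2
          omega
        · rcases Nat.eq_or_lt_of_le ht2 with he | hlt
          · have et := vB t (by omega)
            omega
          · have et := (vC t hlt).1
            have := (vC t hlt).2
            rw [et]
            omega
      · rcases Nat.eq_or_lt_of_le hs2 with he | hlt
        · have es := vB s (by omega)
          rcases Nat.lt_or_ge (t : ℕ) (d + m) with ht2 | ht2
          · omega
          · rcases Nat.eq_or_lt_of_le ht2 with he2 | hlt2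
            · omega
            · have et := (vC t hlt2).1
              have := (vC t hlt2).2
              rw [et]
              omega
        · have es := (vC s hlt).1
          have et := (vC t (by omega)).1
          rw [es, et]
          have := h2 s t (by omega) (by rw [Fin.lt_iff_val_lt_val]; omega)
          rw [Fin.lt_iff_val_lt_val] at this
          omega
    have hsign' := ih (fun s t hst htd => hq s t hst (by omega))
      (fun s hs => hqN s (by omega)) π' h1' h2'
    have hsc : Equiv.Perm.sign cc = (-1) ^ m := sign_cyc m hdm
    have : Equiv.Perm.sign π' = Equiv.Perm.sign π * (-1) ^ m := by
      rw [hπ', Equiv.Perm.sign_mul, hsc]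
    rw [hsign'] at this
    rw [Finset.sum_range_succ, pow_add]
    have hinv : ((-1 : ℤˣ) ^ m) * ((-1 : ℤˣ) ^ m) = 1 := by
      rw [← pow_add, ← two_mul, pow_mul]
      simp
    calc Equiv.Perm.sign π = Equiv.Perm.sign π * (((-1 : ℤˣ) ^ m) * ((-1 : ℤˣ) ^ m)) := by
          rw [hinv, mul_one]
      _ = (Equiv.Perm.sign π * (-1) ^ m) * (-1) ^ m := (mul_assoc _ _ _).symm
      _ = (-1) ^ (∑ s ∈ Finset.range d, q s) * (-1) ^ (q d) := by rw [← this]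

/-- determinant of a matrix which is the identity off the rows in the range of `q`. -/
lemma lemB {d : ℕ} (M : Matrix (Fin N) (Fin N) ℝ) (q : Fin d → Fin N)
    (hq : Function.Injective q)
    (h : ∀ r, r ∉ Set.range q → ∀ j, M r j = (1 : Matrix (Fin N) (Fin N) ℝ) r j) :
    M.det = (M.submatrix q q).det := by
  classical
  let e : (Fin d ⊕ {r : Fin N // r ∉ Set.range q}) ≃ Fin N :=
    ((Equiv.ofInjective q hq).sumCongr (Equiv.refl _)).trans
      (Equiv.sumCompl (· ∈ Set.range q))
  have he1 : ∀ s : Fin d, e (Sum.inl s) = q s := fun s => rfl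
  have he2 : ∀ r, e (Sum.inr r) = r.1 := fun r => rfl
  rw [← Matrix.det_submatrix_equiv_self e M]
  have hblock : M.submatrix e e = Matrix.fromBlocks (M.submatrix q q)
      (Matrix.of fun (s : Fin d) (r : {r : Fin N // r ∉ Set.range q}) => M (q s) r.1) 0 1 := by
    ext i j
    cases i with
    | inl s =>
      cases j with
      | inl t => simp [Matrix.submatrix_apply, he1]
      | inr r => simp [Matrix.submatrix_apply, he1, he2]
    | inr r =>
      cases j with
      | inl t =>
        have := h r.1 r.2 (q t)
        rw [Matrix.one_apply_ne (by intro hrt; exact r.2 ⟨t, hrt.symm⟩)] at this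
        simpa [Matrix.submatrix_apply, he1, he2] using this
      | inr r' =>
        have := h r.1 r.2 r'.1
        simp only [Matrix.submatrix_apply, he2, Matrix.fromBlocks_apply₂₂]
        rw [this, Matrix.one_apply, Matrix.one_apply]
        by_cases hrr : r = r'
        · simp [hrr]
        · rw [if_neg hrr, if_neg (by intro hv; exact hrr (Subtype.ext hv))]
  rw [hblock, Matrix.det_fromBlocks_zero₂₁, Matrix.det_one, mul_one]

/-- the sign-free core of the Giambelli identity. -/
lemma lemA {d : ℕ} (W : Matrix (Fin N) (Fin N) ℝ) (c : ℝ) (hc : c * W.det = 1)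
    (q : Fin d → Fin N) (hq : Function.Injective q) (u : Fin d → Fin N → ℝ)
    (R : Matrix (Fin N) (Fin N) ℝ) (hR1 : ∀ s j, R (q s) j = u s j)
    (hR2 : ∀ r, r ∉ Set.range q → ∀ j, R r j = W r j)
    (Rm : Fin d → Fin d → Matrix (Fin N) (Fin N) ℝ)
    (hRm1 : ∀ i j k, Rm i j (q j) k = u i k)
    (hRm2 : ∀ i j r, r ≠ q j → ∀ k, Rm i j r k = W r k) :
    Matrix.det (Matrix.of fun i j : Fin d => c * (Rm i j).det) = c * R.det := by
  have hWdet : IsUnit W.det := IsUnit.of_mul_eq_one _ ((mul_comm _ _).trans hc)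
  have hWdet' : W.det ≠ 0 := by
    intro h0
    rw [h0, mul_zero] at hc
    exact one_ne_zero hc.symm
  have hWW : W * W⁻¹ = 1 := Matrix.mul_nonsing_inv _ hWdet
  have main : ∀ (e : ℕ) (q' : Fin e → Fin N), Function.Injective q' →
      ∀ A : Matrix (Fin N) (Fin N) ℝ, (∀ r, r ∉ Set.range q' → ∀ j, A r j = W r j) →
      c * A.det = ((A * W⁻¹).submatrix q' q').det := by
    intro e q' hq' A hA
    have h1 : (A * W⁻¹).det = A.det * (W.det)⁻¹ := by
      rw [Matrix.det_mul, Matrix.det_nonsing_inv, Ring.inverse_eq_inv']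
    have hcinv : c = (W.det)⁻¹ := eq_inv_of_mul_eq_one_left hc
    have h2 : c * A.det = (A * W⁻¹).det := by
      rw [h1, hcinv, mul_comm]
    rw [h2]
    apply lemB _ q' hq'
    intro r hr j
    rw [Matrix.mul_apply]
    have : ∀ k, A r k * W⁻¹ k j = W r k * W⁻¹ k j := fun k => by rw [hA r hr k]
    rw [Finset.sum_congr rfl fun k _ => this k, ← Matrix.mul_apply, hWW]
  have hRdet : c * R.det = ((R * W⁻¹).submatrix q q).det := main d q hq R hR2
  have hRm : ∀ i j : Fin d, c * (Rm i j).det = (Rm i j * W⁻¹) (q j) (q j) := by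
    intro i j
    have hinj : Function.Injective (fun _ : Fin 1 => q j) := fun a b _ => Subsingleton.elim a b
    have := main 1 (fun _ : Fin 1 => q j) hinj (Rm i j) (by
      intro r hr k
      apply hRm2 i j r (by
        intro hrq
        exact hr ⟨0, hrq.symm⟩) k)
    rw [this, Matrix.det_fin_one]
    rfl
  have hentry : ∀ i j : Fin d, (Rm i j * W⁻¹) (q j) (q j) = (R * W⁻¹) (q i) (q j) := by
    intro i j
    rw [Matrix.mul_apply, Matrix.mul_apply]
    apply Finset.sum_congr rfl
    intro k _
    rw [hRm1 i j k, hR1 i k]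
  rw [hRdet]
  congr 1
  ext i j
  rw [Matrix.of_apply, hRm i j, hentry i j]
  rfl

/-- characterization of the conjugate partition. -/
lemma conj_iff (ν : ℕ → ℕ) (hν : Antitone ν) (K : ℕ) (hK : ∀ i, K ≤ i → ν i = 0)
    (t j : ℕ) : j < conjP ν t ↔ t < ν j := by
  classical
  set F : Finset ℕ := (Finset.range K).filter (fun i => t < ν i) with hF
  have hset : {i : ℕ | t < ν i} = (↑F : Set ℕ) := by
    ext i
    simp only [Set.mem_setOf_eq, hF, Finset.coe_filter, Finset.mem_range, Set.mem_setOf_eq]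
    constructor
    · intro h
      refine ⟨?_, h⟩
      by_contra hi
      rw [hK i (by omega)] at h
      omega
    · exact fun h => h.2
  have hcard : conjP ν t = F.card := by
    rw [conjP]
    have : Nat.card {j : ℕ // t < ν j} = Nat.card {i : ℕ | t < ν i} := rfl
    rw [this, Nat.card_coe_set_eq, hset, Set.ncard_coe_finset]
  constructor
  · intro h
    by_contra hcon
    have hνj : ν j ≤ t := by omega
    have hsub : F ⊆ Finset.range j := by
      intro x hx
      rw [hF, Finset.mem_filter] at hx
      rw [Finset.mem_range]
      by_contra hxj
      have := hν (show j ≤ x by omega)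
      omega
    have := Finset.card_le_card hsub
    rw [Finset.card_range] at this
    omega
  · intro h
    have hsub : Finset.range (j + 1) ⊆ F := by
      intro x hx
      rw [Finset.mem_range] at hx
      rw [hF, Finset.mem_filter, Finset.mem_range]
      have h1 : t < ν x := lt_of_lt_of_le h (hν (by omega))
      refine ⟨?_, h1⟩
      by_contra hxK
      rw [hK x (by omega)] at h1
      omega
    have := Finset.card_le_card hsub
    rw [Finset.card_range] at this
    omega

lemma keyRepr (α : Measure ℝ) {N : ℕ} (hN : 1 ≤ N) (c : ℝ) (ν : ℕ → ℕ) (hν : Antitone ν)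
    (K : ℕ) (hK : ∀ i, K ≤ i → ν i = 0) (d : ℕ) (hd : ∀ i, i < d ↔ i < ν i)
    (hνN : ν N = 0) :
    ∃ R : Matrix (Fin N) (Fin N) ℝ,
      (∀ (t : ℕ) (ht : t < d) (hlt : conjP ν t - (t+1) < N) (j : Fin N),
          R ⟨conjP ν t - (t+1), hlt⟩ j = moment α ((ν t - (t+1)) + N + (N - 1 - (j:ℕ))))
      ∧ (∀ r : Fin N, (∀ t, t < d → (r:ℕ) ≠ conjP ν t - (t+1)) →
          ∀ j : Fin N, R r j = moment α ((N - 1 - (r:ℕ)) + (N - 1 - (j:ℕ))))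
      ∧ opeAvg α N c ν
          = c * (-1)^(∑ t ∈ Finset.range d, (conjP ν t - (t+1))) * R.det := by
  have cj : ∀ t j, j < conjP ν t ↔ t < ν j := fun t j => conj_iff ν hν K hK t j
  have hdN : d ≤ N := by
    by_contra h
    have := (hd N).mp (by omega)
    omega
  have qlt : ∀ t, t < d → conjP ν t - (t+1) < N := by
    intro t ht
    have h1 := cj t N
    omega
  have qpos : ∀ t, t < d → t + 1 ≤ conjP ν t := by
    intro t ht
    have := (cj t t).mpr ((hd t).mp ht)
    omega
  have conj_anti : ∀ s t, s ≤ t → conjP ν t ≤ conjP ν s := by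
    intro s t hst
    by_contra h
    have h1 := (cj t (conjP ν s)).mp (by omega)
    have h2 := (cj s (conjP ν s)).mpr (by omega)
    omega
  have qanti : ∀ s t, s < t → t < d → conjP ν t - (t+1) < conjP ν s - (s+1) := by
    intro s t hst htd
    have h1 := conj_anti s t (le_of_lt hst)
    have h2 := qpos t htd
    omega
  have hνle : ∀ s, d ≤ s → ν s ≤ s := by
    intro s hs
    have := hd s
    omega
  have disj : ∀ s t, d ≤ s → t < d → s - ν s ≠ conjP ν t - (t+1) := by
    intro s t hs ht hcon
    have hνs := hνle s hs
    have hct := qpos t ht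
    have hiff := cj t s
    rcases Nat.lt_or_ge s (conjP ν t) with h | h
    · have := hiff.mp h
      omega
    · have h2 : ¬ (t < ν s) := fun hh => absurd (hiff.mpr hh) (by omega)
      omega
  let f : Fin N → Fin N := fun s =>
    if h : (s : ℕ) < d then ⟨conjP ν (s:ℕ) - ((s:ℕ)+1), qlt _ h⟩
    else ⟨(s:ℕ) - ν (s:ℕ), by have := s.isLt; omega⟩
  have hfinj : Function.Injective f := by
    intro a b hab
    have hv := congrArg Fin.val hab
    simp only [f] at hv
    split_ifs at hv with ha hb hb
    · rcases Nat.lt_trichotomy (a:ℕ) (b:ℕ) with h | h | h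
      · exact absurd hv.symm (Nat.ne_of_lt (qanti _ _ h hb))
      · exact Fin.ext h
      · exact absurd hv (Nat.ne_of_lt (qanti _ _ h ha))
    · exact absurd hv.symm (disj _ _ (by omega) ha)
    · exact absurd hv (disj _ _ (by omega) hb)
    · have hv' : (a:ℕ) - ν (a:ℕ) = (b:ℕ) - ν (b:ℕ) := by simpa using hv
      rcases Nat.lt_trichotomy (a:ℕ) (b:ℕ) with h | h | h
      · have h1 := hν (le_of_lt h)
        have h2 := hνle (a:ℕ) (by omega)
        omega
      · exact Fin.ext h
      · have h1 := hν (le_of_lt h)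
        have h2 := hνle (b:ℕ) (by omega)
        omega
  let π : Equiv.Perm (Fin N) := Equiv.ofBijective f (Finite.injective_iff_bijective.mp hfinj)
  have hπ : ∀ s, π s = f s := fun s => rfl
  have h1π : ∀ s : Fin N, (s:ℕ) < d → (π s : ℕ) = conjP ν (s:ℕ) - ((s:ℕ)+1) := by
    intro s hs
    rw [hπ]
    simp only [f, dif_pos hs]
  have h2π : ∀ s t : Fin N, d ≤ (s:ℕ) → s < t → π s < π t := by
    intro s t hs hst
    rw [Fin.lt_iff_val_lt_val] at hst
    rw [hπ, hπ]
    simp only [f, dif_neg (not_lt.mpr hs), dif_neg (not_lt.mpr (show d ≤ (t:ℕ) by omega))]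
    rw [Fin.mk_lt_mk]
    have h1 := hν (show (s:ℕ) ≤ (t:ℕ) by omega)
    have h2 := hνle (s:ℕ) hs
    omega
  have hsign := sign_of_perm d (fun t => conjP ν t - (t+1)) (fun s t hst htd => qanti s t hst htd)
    (fun s hs => qlt s hs) π h1π h2π
  set Mν : Matrix (Fin N) (Fin N) ℝ :=
    Matrix.of (fun i j : Fin N => moment α ((ν (i:ℕ) + (N-1) - (i:ℕ)) + (N - 1 - (j:ℕ)))) with hMνdef
  refine ⟨Matrix.of (fun r j => Mν (π.symm r) j), ?_, ?_, ?_⟩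
  · intro t ht hlt j
    have htN : t < N := lt_of_lt_of_le ht hdN
    have hπt : π ⟨t, htN⟩ = ⟨conjP ν t - (t+1), hlt⟩ := by
      rw [hπ]
      simp only [f, dif_pos (show ((⟨t, htN⟩ : Fin N) : ℕ) < d from ht)]
    have hsymm : π.symm ⟨conjP ν t - (t+1), hlt⟩ = ⟨t, htN⟩ := by
      rw [← hπt, Equiv.symm_apply_apply]
    rw [Matrix.of_apply, hsymm, hMνdef, Matrix.of_apply]
    simp only [Fin.val_mk]
    congr 1
    have hνt : t < ν t := (hd t).mp ht
    have := (j:ℕ); have hj := j.isLt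
    omega
  · intro r hr j
    set s := π.symm r with hs
    have hπs : π s = r := Equiv.apply_symm_apply π r
    have hsd : d ≤ (s:ℕ) := by
      by_contra h
      push_neg at h
      have he := h1π s h
      rw [hπs] at he
      exact hr (s:ℕ) h he
    have rval : (r:ℕ) = (s:ℕ) - ν (s:ℕ) := by
      rw [← hπs, hπ]
      simp only [f, dif_neg (not_lt.mpr hsd)]
    rw [Matrix.of_apply, ← hs, hMνdef, Matrix.of_apply]
    congr 1
    have h1 := hνle (s:ℕ) hsd
    have h2 := s.isLt
    have hj := j.isLt
    omega
  · rw [opeAvg, if_pos hνN]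
    have hMν : Matrix.of (fun i j : Fin N => moment α (ν (i:ℕ) + 2*(N-1) - (i:ℕ) - (j:ℕ))) = Mν := by
      ext i j
      rw [hMνdef, Matrix.of_apply, Matrix.of_apply]
      congr 1
      have hi := i.isLt
      have hj := j.isLt
      omega
    have hMR : Mν = (Matrix.of (fun r j => Mν (π.symm r) j)).submatrix π id := by
      ext i j
      rw [Matrix.submatrix_apply, Matrix.of_apply, Equiv.symm_apply_apply]
      rfl
    have hcast : ((Equiv.Perm.sign π : ℤ) : ℝ)
        = (-1)^(∑ t ∈ Finset.range d, (conjP ν t - (t+1))) := by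
      rw [hsign]
      push_cast
      ring
    have hdet : Mν.det = ((Equiv.Perm.sign π : ℤ) : ℝ)
        * (Matrix.of (fun r j => Mν (π.symm r) j)).det := by
      conv_lhs => rw [hMR]
      rw [Matrix.det_permute]
    rw [hMν, hdet, hcast]
    ring

lemma hook_antitone (p q : ℕ) : Antitone (hookP p q) := by
  intro a b hab
  simp only [hookP]
  split_ifs <;> omega

lemma hook_support (p q : ℕ) : ∀ i, q + 1 ≤ i → hookP p q i = 0 := by
  intro i hi
  simp only [hookP]
  rw [if_neg (by omega), if_neg (by omega)]

lemma hook_rank (p q : ℕ) : ∀ i, i < 1 ↔ i < hookP p q i := by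
  intro i
  simp only [hookP]
  split_ifs <;> omega

lemma hook_zero (p q : ℕ) : hookP p q 0 = p + 1 := by simp [hookP]

lemma hook_conj0 (p q : ℕ) : conjP (hookP p q) 0 = q + 1 := by
  have cj := conj_iff (hookP p q) (hook_antitone p q) (q+1) (hook_support p q)
  have h1 := cj 0 q
  have h3 := cj 0 (q+1)
  have hq : 0 < hookP p q q := by simp only [hookP]; split_ifs <;> omega
  have hq1 : hookP p q (q+1) = 0 := hook_support p q (q+1) le_rfl
  omega

end GiambelliAux

open GiambelliAux

theorem ope_giambelli_compatible (α : Measure ℝ)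
    (hmom : ∀ n : ℕ, Integrable (fun x => x ^ n) α)
    (N : ℕ) (hN : 1 ≤ N) (c : ℝ)
    (hc : opeAvg α N c (fun _ => 0) = 1)
    (μ : ℕ → ℕ) (hμ : Antitone μ) (k : ℕ) (hk : ∀ i, k ≤ i → μ i = 0)
    (d : ℕ) (hd : ∀ i, i < d ↔ i < μ i) :
    opeAvg α N c μ =
      Matrix.det (Matrix.of fun i j : Fin d =>
        opeAvg α N c (hookP (μ i - (i + 1)) (conjP μ j - (j + 1)))) := by
  classical
  have cj : ∀ t j, j < conjP μ t ↔ t < μ j := fun t j => conj_iff μ hμ k hk t j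
  by_cases hμN : μ N = 0
  · -- main case: μ has at most N parts
    have hdN : d ≤ N := by
      by_contra h
      have := (hd N).mp (by omega)
      omega
    have qlt : ∀ t, t < d → conjP μ t - (t+1) < N := by
      intro t ht
      have h1 := cj t N
      omega
    have qpos : ∀ t, t < d → t + 1 ≤ conjP μ t := by
      intro t ht
      have := (cj t t).mpr ((hd t).mp ht)
      omega
    have conj_anti : ∀ s t, s ≤ t → conjP μ t ≤ conjP μ s := by
      intro s t hst
      by_contra h
      have h1 := (cj t (conjP μ s)).mp (by omega)
      have h2 := (cj s (conjP μ s)).mpr (by omega)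
      omega
    have qanti : ∀ s t, s < t → t < d → conjP μ t - (t+1) < conjP μ s - (s+1) := by
      intro s t hst htd
      have h1 := conj_anti s t (le_of_lt hst)
      have h2 := qpos t htd
      omega
    obtain ⟨R, hR1, hR2, hR3⟩ := keyRepr α hN c μ hμ k hk d hd hμN
    -- the hook data
    have Hk : ∀ i j : Fin d, ∃ Rh : Matrix (Fin N) (Fin N) ℝ,
        (∀ jc : Fin N, Rh ⟨conjP μ (j:ℕ) - ((j:ℕ)+1), qlt _ j.isLt⟩ jc
            = moment α ((μ (i:ℕ) - ((i:ℕ)+1)) + N + (N - 1 - (jc:ℕ))))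
        ∧ (∀ r : Fin N, r ≠ ⟨conjP μ (j:ℕ) - ((j:ℕ)+1), qlt _ j.isLt⟩ →
            ∀ jc : Fin N, Rh r jc = moment α ((N - 1 - (r:ℕ)) + (N - 1 - (jc:ℕ))))
        ∧ opeAvg α N c (hookP (μ (i:ℕ) - ((i:ℕ)+1)) (conjP μ (j:ℕ) - ((j:ℕ)+1)))
            = c * (-1)^(conjP μ (j:ℕ) - ((j:ℕ)+1)) * Rh.det := by
      intro i j
      set p : ℕ := μ (i:ℕ) - ((i:ℕ)+1) with hp
      set q : ℕ := conjP μ (j:ℕ) - ((j:ℕ)+1) with hq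
      have hqN : q < N := qlt _ j.isLt
      have hHN : hookP p q N = 0 := hook_support p q N (by omega)
      obtain ⟨Rh, h1, h2, h3⟩ := keyRepr α hN c (hookP p q) (hook_antitone p q)
        (q+1) (hook_support p q) 1 (hook_rank p q) hHN
      have hc0 : conjP (hookP p q) 0 - (0+1) = q := by rw [hook_conj0]; omega
      refine ⟨Rh, ?_, ?_, ?_⟩
      · intro jc
        have hl : conjP (hookP p q) 0 - (0+1) < N := by rw [hc0]; exact hqN
        have := h1 0 (by omega) hl jc
        rw [show (⟨q, hqN⟩ : Fin N) = ⟨conjP (hookP p q) 0 - (0+1), hl⟩ from Fin.ext hc0.symm]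
        rw [this, hook_zero]
        congr 1
      · intro r hr jc
        apply h2
        intro t ht
        have ht0 : t = 0 := by omega
        subst ht0
        rw [hc0]
        intro hco
        exact hr (Fin.ext hco)
      · rw [h3, Finset.sum_range_one, hc0]
    choose Rm hm1 hm2 hm3 using Hk
    -- reference matrix
    set W : Matrix (Fin N) (Fin N) ℝ :=
      Matrix.of (fun r jc : Fin N => moment α ((N - 1 - (r:ℕ)) + (N - 1 - (jc:ℕ)))) with hWdef
    have hcW : c * W.det = 1 := by
      rw [opeAvg, if_pos rfl] at hc
      rw [← hc]
      congr 2
      ext r jc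
      rw [hWdef, Matrix.of_apply, Matrix.of_apply]
      congr 1
      have := r.isLt
      have := jc.isLt
      omega
    set qF : Fin d → Fin N := fun t => ⟨conjP μ (t:ℕ) - ((t:ℕ)+1), qlt _ t.isLt⟩ with hqFdef
    have hqF : Function.Injective qF := by
      intro a b hab
      have hv := congrArg Fin.val hab
      simp only [hqFdef] at hv
      rcases Nat.lt_trichotomy (a:ℕ) (b:ℕ) with h | h | h
      · exact absurd hv.symm (Nat.ne_of_lt (qanti _ _ h b.isLt))
      · exact Fin.ext h
      · exact absurd hv (Nat.ne_of_lt (qanti _ _ h a.isLt))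
    set u : Fin d → Fin N → ℝ :=
      fun t jc => moment α ((μ (t:ℕ) - ((t:ℕ)+1)) + N + (N - 1 - (jc:ℕ))) with hudef
    have hR1' : ∀ s : Fin d, ∀ jc, R (qF s) jc = u s jc := by
      intro s jc
      exact hR1 (s:ℕ) s.isLt (qlt _ s.isLt) jc
    have hR2' : ∀ r, r ∉ Set.range qF → ∀ jc, R r jc = W r jc := by
      intro r hr jc
      apply hR2
      intro t ht hco
      exact hr ⟨⟨t, ht⟩, Fin.ext hco.symm⟩
    have hRm1' : ∀ i j : Fin d, ∀ kc, Rm i j (qF j) kc = u i kc := by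
      intro i j kc
      exact hm1 i j kc
    have hRm2' : ∀ i j : Fin d, ∀ r, r ≠ qF j → ∀ kc, Rm i j r kc = W r kc := by
      intro i j r hr kc
      exact hm2 i j r hr kc
    have key := lemA W c hcW qF hqF u R hR1' hR2' Rm hRm1' hRm2'
    rw [hR3]
    have hRHS : (Matrix.of fun i j : Fin d =>
          opeAvg α N c (hookP (μ (i:ℕ) - ((i:ℕ) + 1)) (conjP μ (j:ℕ) - ((j:ℕ) + 1))))
        = Matrix.of (fun i j : Fin d => ((-1:ℝ)^(conjP μ (j:ℕ) - ((j:ℕ)+1)))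
            * ((Matrix.of fun i' j' : Fin d => c * (Rm i' j').det) i j)) := by
      ext i j
      rw [Matrix.of_apply, Matrix.of_apply, Matrix.of_apply, hm3 i j]
      ring
    rw [hRHS, Matrix.det_mul_row, key]
    have hprod : (∏ j : Fin d, ((-1:ℝ)^(conjP μ (j:ℕ) - ((j:ℕ)+1))))
        = (-1)^(∑ t ∈ Finset.range d, (conjP μ t - (t+1))) := by
      rw [Finset.prod_pow_eq_pow_sum]
      congr 1
      exact Fin.sum_univ_eq_sum_range (fun t => conjP μ t - (t+1)) d
    rw [hprod]
    ring
  · -- degenerate case: μ has more than N parts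
    rw [opeAvg, if_neg hμN]
    have hd0 : 0 < d := by
      rw [hd 0]
      have := hμ (Nat.zero_le N)
      omega
    symm
    apply Matrix.det_eq_zero_of_column_eq_zero ⟨0, hd0⟩
    intro i
    rw [Matrix.of_apply]
    have hq0 : N ≤ conjP μ 0 - (0+1) := by
      have := (cj 0 N).mpr (by omega)
      omega
    rw [opeAvg, if_neg ?_]
    simp only [hookP]
    rw [if_neg (by omega), if_pos (by omega)]
    exact one_ne_zero
end
end

section
/- Estimate for products: Fix ε > 0 and let u ∈ ℂ satisfy ε < |arg u| < π − ε. Let δ > 0 and let α_1 ≥ α_2 ≥ … ≥ 0 and β_1 ≥ β_2 ≥ … ≥ 0 satisfy Σ_i (α_i + β_i) ≤ δ. Then there exists a constant C = C(ε) > 0 depending only on ε such that | ∏_{i=1}^∞ (1 + β_i u^{-1}) / (1 − α_i u^{-1}) | ≤ exp( C δ |u^{-1}| ). -/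
/-!
STATEMENT 9: estimate for the products `∏ (1+β_i u⁻¹)/(1−α_i u⁻¹)`
uniformly over sequences with `Σ(α_i+β_i) ≤ δ`, with a constant depending
only on ε (Lemma 4.3 of the paper).
-/

set_option maxHeartbeats 1000000

open Real

private lemma quad_aux (s c t C : ℝ) (hs : 0 < s) (hc1 : c ≤ 1)
    (hcs : c^2 ≤ 1 - s^2) (hC : C = 1 + s⁻¹^2) (ht : 0 ≤ t) :
    1 ≤ (1 - 2*c*t + t^2) * (1 + 2*C*t) := by
  have hC1 : (1:ℝ) ≤ C := by rw [hC]; nlinarith [sq_nonneg s⁻¹]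
  have hCs : C * s^2 = s^2 + 1 := by
    rw [hC]; field_simp
  have h16 : C^2 * s^2 = C * (s^2 + 1) := by
    rw [pow_two, mul_assoc, hCs]
  have hqd : 0 ≤ 2*C*t^2 + (1 - 4*C*c)*t + (2*C - 2*c) := by
    nlinarith [sq_nonneg (4*C*t + (1 - 4*C*c)), h16, hcs, hc1, hC1, sq_nonneg s,
      sq_nonneg c, sq_nonneg (C*c)]
  nlinarith [mul_nonneg ht hqd]

private lemma denom_aux (s c t : ℝ) (hs : 0 < s) (hc1 : c ≤ 1)
    (hcs : c^2 ≤ 1 - s^2) (ht : 0 ≤ t) :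
    Real.exp (-((1 + s⁻¹^2) * t)) ^ 2 ≤ 1 - 2*c*t + t^2 := by
  set C := 1 + s⁻¹^2 with hC
  have hq := quad_aux s c t C hs hc1 hcs hC ht
  have hCpos : 0 < C := by rw [hC]; positivity
  have hp : (0:ℝ) < 1 + 2*C*t := by positivity
  have h1 : (1:ℝ) + 2*C*t ≤ Real.exp (2*C*t) := by
    have := Real.add_one_le_exp (2*C*t); linarith
  have h2 : Real.exp (-(C*t)) ^ 2 = Real.exp (-(2*C*t)) := by
    rw [sq, ← Real.exp_add]; ring_nf
  rw [h2]
  have hd1 : 1/(1+2*C*t) ≤ 1 - 2*c*t + t^2 := (div_le_iff₀ hp).mpr (by linarith [hq])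
  have hd2 : Real.exp (-(2*C*t)) ≤ 1/(1+2*C*t) := by
    rw [Real.exp_neg, ← one_div]
    exact one_div_le_one_div_of_le hp h1
  linarith

theorem product_estimate (ε : ℝ) (hε : 0 < ε) :
    ∃ C : ℝ, 0 < C ∧
      ∀ (u : ℂ) (δ : ℝ) (α β : ℕ → ℝ),
        ε < |Complex.arg u| → |Complex.arg u| < Real.pi - ε →
        0 < δ →
        Antitone α → Antitone β →
        (∀ i, 0 ≤ α i) → (∀ i, 0 ≤ β i) →
        Summable (fun i => α i + β i) →
        (∑' i, (α i + β i)) ≤ δ →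
        ‖∏' i : ℕ, (1 + (β i : ℂ) * u⁻¹) / (1 - (α i : ℂ) * u⁻¹)‖ ≤
          Real.exp (C * δ * ‖u⁻¹‖) := by
  set s : ℝ := Real.sin (min ε 1) with hsdef
  set C : ℝ := 1 + s⁻¹^2 with hCdef
  have hmin0 : 0 < min ε 1 := lt_min hε one_pos
  have hmin1 : min ε 1 ≤ 1 := min_le_right _ _
  have hs : 0 < s := Real.sin_pos_of_pos_of_lt_pi hmin0 (by
    have := Real.pi_gt_three; linarith)
  have hCpos : 0 < C := by rw [hCdef]; positivity
  have hC1 : (1:ℝ) ≤ C := by rw [hCdef]; nlinarith [sq_nonneg s⁻¹]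
  refine ⟨C, hCpos, ?_⟩
  intro u δ α β h1 h2 hδ hα hβ hα0 hβ0 hsum hle
  have hεhalf : ε < π / 2 := by linarith
  have hu : u ≠ 0 := by
    intro h; rw [h, Complex.arg_zero] at h1; simp at h1; linarith
  -- c = cos ε bounds
  set c : ℝ := Real.cos ε with hcdef
  have hc1 : c ≤ 1 := Real.cos_le_one ε
  have hcs : c^2 ≤ 1 - s^2 := by
    have hsin : s ≤ Real.sin ε := by
      rw [hsdef]
      apply Real.strictMonoOn_sin.monotoneOn
        ⟨by linarith [Real.pi_pos], by linarith [Real.pi_gt_three]⟩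
        ⟨by linarith [Real.pi_pos], hεhalf.le⟩ (min_le_left _ _)
    have := Real.sin_sq_add_cos_sq ε
    have hsin0 : 0 ≤ Real.sin ε := le_trans hs.le hsin
    nlinarith
  have habs : (0:ℝ) < ‖u‖ := norm_pos_iff.mpr hu
  -- Re u⁻¹ ≤ c * ‖u⁻¹‖
  have hre : (u⁻¹).re ≤ c * ‖u⁻¹‖ := by
    have hargle : Real.cos (Complex.arg u) ≤ c := by
      rw [hcdef, ← Real.cos_abs (Complex.arg u)]
      apply Real.strictAntiOn_cos.antitoneOn ⟨hε.le, by linarith [Real.pi_pos]⟩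
        ⟨abs_nonneg _, Complex.abs_arg_le_pi u⟩ h1.le
    have hcosarg : u.re = Real.cos (Complex.arg u) * ‖u‖ := by
      rw [Complex.cos_arg hu]; field_simp
    have hinvre : (u⁻¹).re = u.re / ‖u‖^2 := by
      rw [Complex.inv_re, Complex.normSq_eq_norm_sq]
    have hnormi : ‖u⁻¹‖ = ‖u‖⁻¹ := by
      rw [norm_inv]
    have heq : (u⁻¹).re = Real.cos (Complex.arg u) * ‖u⁻¹‖ := by
      rw [hinvre, hnormi, hcosarg]
      field_simp
    rw [heq]
    exact mul_le_mul_of_nonneg_right hargle (norm_nonneg _)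
  have hnormipos : 0 < ‖u⁻¹‖ := by
    simp [norm_pos_iff, hu]
  -- per-factor bound
  set f : ℕ → ℂ := fun i => (1 + (β i : ℂ) * u⁻¹) / (1 - (α i : ℂ) * u⁻¹) with hfdef
  have hnsq : ‖u⁻¹‖^2 = (u⁻¹).re * (u⁻¹).re + (u⁻¹).im * (u⁻¹).im := by
    rw [Complex.sq_norm, Complex.normSq_apply]
  have hfac : ∀ i, ‖f i‖ ≤ Real.exp (C * ‖u⁻¹‖ * (α i + β i)) := by
    intro i
    have hti : 0 ≤ α i * ‖u⁻¹‖ := mul_nonneg (hα0 i) hnormipos.le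
    -- denominator lower bound
    have hden : Real.exp (-(C * (α i * ‖u⁻¹‖))) ≤ ‖1 - (α i : ℂ) * u⁻¹‖ := by
      have hkey := denom_aux s c (α i * ‖u⁻¹‖) hs hc1 hcs hti
      rw [← hCdef] at hkey
      have hsq : ‖1 - (α i : ℂ) * u⁻¹‖^2 =
          1 - 2 * (α i * (u⁻¹).re) + (α i * ‖u⁻¹‖)^2 := by
        rw [Complex.sq_norm, Complex.normSq_apply, mul_pow, hnsq]
        simp only [Complex.sub_re, Complex.sub_im, Complex.one_re, Complex.one_im,
          Complex.mul_re, Complex.mul_im, Complex.ofReal_re, Complex.ofReal_im]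
        ring
      have hle2 : Real.exp (-(C * (α i * ‖u⁻¹‖)))^2 ≤ ‖1 - (α i : ℂ) * u⁻¹‖^2 := by
        rw [hsq]
        have hmono : α i * (u⁻¹).re ≤ c * (α i * ‖u⁻¹‖) := by
          have := mul_le_mul_of_nonneg_left hre (hα0 i)
          nlinarith
        linarith [hkey, hmono]
      nlinarith [Real.exp_pos (-(C * (α i * ‖u⁻¹‖))), norm_nonneg (1 - (α i : ℂ) * u⁻¹),
        hle2]
    have hnum : ‖1 + (β i : ℂ) * u⁻¹‖ ≤ Real.exp (C * (β i * ‖u⁻¹‖)) := by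
      have hn1 : ‖1 + (β i : ℂ) * u⁻¹‖ ≤ 1 + β i * ‖u⁻¹‖ := by
        calc ‖1 + (β i : ℂ) * u⁻¹‖ ≤ ‖(1:ℂ)‖ + ‖(β i : ℂ) * u⁻¹‖ := norm_add_le _ _
          _ = 1 + β i * ‖u⁻¹‖ := by
              rw [norm_one, norm_mul, Complex.norm_real, Real.norm_eq_abs, abs_of_nonneg (hβ0 i)]
      have hn2 : 1 + β i * ‖u⁻¹‖ ≤ Real.exp (β i * ‖u⁻¹‖) := by
        have := Real.add_one_le_exp (β i * ‖u⁻¹‖); linarith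
      have hn3 : Real.exp (β i * ‖u⁻¹‖) ≤ Real.exp (C * (β i * ‖u⁻¹‖)) := by
        apply Real.exp_le_exp.mpr
        nlinarith [mul_nonneg (hβ0 i) hnormipos.le]
      linarith
    have hdiv : ‖f i‖ ≤ Real.exp (C * (β i * ‖u⁻¹‖)) / Real.exp (-(C * (α i * ‖u⁻¹‖))) := by
      rw [hfdef]
      simp only [norm_div]
      exact div_le_div₀ (Real.exp_pos _).le hnum (Real.exp_pos _) hden
    calc ‖f i‖ ≤ Real.exp (C * (β i * ‖u⁻¹‖)) / Real.exp (-(C * (α i * ‖u⁻¹‖))) := hdiv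
      _ = Real.exp (C * ‖u⁻¹‖ * (α i + β i)) := by
          rw [← Real.exp_sub]; ring_nf
  -- finset bound
  have hbound : ∀ S : Finset ℕ, ‖∏ i ∈ S, f i‖ ≤ Real.exp (C * δ * ‖u⁻¹‖) := by
    intro S
    have hb2 : ∏ i ∈ S, ‖f i‖ ≤ ∏ i ∈ S, Real.exp (C * ‖u⁻¹‖ * (α i + β i)) :=
      Finset.prod_le_prod (fun i _ => norm_nonneg _) (fun i _ => hfac i)
    have hb4 : ∑ i ∈ S, C * ‖u⁻¹‖ * (α i + β i) ≤ C * δ * ‖u⁻¹‖ := by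
      rw [← Finset.mul_sum]
      have hS : ∑ i ∈ S, (α i + β i) ≤ δ :=
        le_trans (Summable.sum_le_tsum S (fun i _ => by nlinarith [hα0 i, hβ0 i]) hsum) hle
      have := mul_le_mul_of_nonneg_left hS
        (show (0:ℝ) ≤ C * ‖u⁻¹‖ by positivity)
      nlinarith [this]
    calc ‖∏ i ∈ S, f i‖ = ∏ i ∈ S, ‖f i‖ := norm_prod S f
      _ ≤ ∏ i ∈ S, Real.exp (C * ‖u⁻¹‖ * (α i + β i)) := hb2
      _ = Real.exp (∑ i ∈ S, C * ‖u⁻¹‖ * (α i + β i)) := (Real.exp_sum S _).symm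
      _ ≤ Real.exp (C * δ * ‖u⁻¹‖) := Real.exp_le_exp.mpr hb4
  by_cases hm : Multipliable f
  · have hp' : Filter.Tendsto (fun S : Finset ℕ => ∏ i ∈ S, f i)
        Filter.atTop (nhds (∏' i, f i)) := hm.hasProd
    exact le_of_tendsto hp'.norm (Filter.Eventually.of_forall hbound)
  · rw [tprod_eq_one_of_not_multipliable hm, norm_one]
    exact Real.one_le_exp (by positivity)
end

section
/- Residue of the Gauss hypergeometric function at non-positive integer values of the parameter c: for a, b ∈ ℂ, n ∈ ℤ_{≥0}, and ζ ∈ ℂ with |ζ| < 1, the function c ↦ F(a,b;c;ζ) = Σ_{k≥0} (a)_k(b)_k ζ^k / ((c)_k k!) is meromorphic with a simple pole at c = −n, and Res_{c=−n} F(a,b;c;ζ) = (−1)^n ζ^{n+1} (a)_{n+1}(b)_{n+1} / (n! (n+1)!) · F(a+n+1, b+n+1; n+2; ζ). -/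
/-!
STATEMENT 16: residue of the Gauss hypergeometric function at c = −n:
Res_{c=−n} F(a,b;c;ζ)
  = (−1)^n ζ^{n+1} (a)_{n+1}(b)_{n+1} / (n!(n+1)!) · F(a+n+1,b+n+1;n+2;ζ).
The residue of the simple pole is expressed as the limit of (c+n)·F(a,b;c;ζ)
as c → −n (along c ≠ −n).
-/

open Filter Topology

noncomputable section

/-- The Pochhammer symbol `(a)_k`. -/
def pochC (a : ℂ) (k : ℕ) : ℂ := (ascPochhammer ℂ k).eval a

/-- The Gauss hypergeometric series `F(a,b;c;ζ) = Σ_k (a)_k (b)_k ζ^k /((c)_k k!)`. -/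
def gaussF (a b c ζ : ℂ) : ℂ :=
  ∑' k : ℕ, pochC a k * pochC b k * ζ ^ k / (pochC c k * (k.factorial : ℂ))

/-! ### Auxiliary lemmas -/

lemma pochC_eq_prod (x : ℂ) (k : ℕ) : pochC x k = ∏ j ∈ Finset.range k, (x + j) := by
  induction k with
  | zero => simp [pochC]
  | succ k ih =>
      rw [pochC, ascPochhammer_succ_eval, ← pochC, ih, Finset.prod_range_succ]

lemma pochC_add (x : ℂ) (n m : ℕ) : pochC x (n + m) = pochC x n * pochC (x + n) m := by
  simp only [pochC_eq_prod, Finset.prod_range_add]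
  congr 1
  refine Finset.prod_congr rfl fun j _ => ?_
  push_cast; ring

lemma pochC_one (m : ℕ) : pochC 1 m = m.factorial := by
  rw [pochC]; exact_mod_cast ascPochhammer_eval_one ℂ m

lemma pochC_succ (x : ℂ) (n : ℕ) : pochC x (n + 1) = pochC x n * (x + n) := by
  rw [pochC, ascPochhammer_succ_eval, ← pochC]

lemma prod_nat_desc (n : ℕ) : (∏ j ∈ Finset.range n, ((n : ℂ) - j)) = n.factorial := by
  rw [← Finset.prod_range_reflect (fun j => (n : ℂ) - j) n]
  have h : ∀ j ∈ Finset.range n, (n : ℂ) - (↑(n - 1 - j)) = ((j + 1 : ℕ) : ℂ) := by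
    intro j hj
    rw [Finset.mem_range] at hj
    have h1 : n = j + 1 + (n - 1 - j) := by omega
    rw [sub_eq_iff_eq_add]
    exact_mod_cast congrArg (Nat.cast : ℕ → ℂ) h1
  rw [Finset.prod_congr rfl h, ← Nat.cast_prod, Finset.prod_range_add_one_eq_factorial]

lemma pochC_neg_nat (n : ℕ) : pochC (-(n : ℂ)) n = (-1) ^ n * n.factorial := by
  rw [pochC_eq_prod]
  have : ∀ j ∈ Finset.range n, -(n:ℂ) + j = (-1) * ((n:ℂ) - j) := by intro j _; ring
  rw [Finset.prod_congr rfl this, Finset.prod_mul_distrib, Finset.prod_const,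
    Finset.card_range, prod_nat_desc]

lemma pochC_nat_ne_zero (n m : ℕ) : pochC ((n : ℂ) + 2) m ≠ 0 := by
  have : ((n : ℂ) + 2) = ((n + 2 : ℕ) : ℂ) := by push_cast; ring
  rw [pochC, this, ← ascPochhammer_eval_cast, Nat.cast_ne_zero,
    ascPochhammer_nat_eq_ascFactorial]
  exact (Nat.ascFactorial_pos (n + 1) m).ne'

def paR (x : ℝ) (k : ℕ) : ℝ := ∏ j ∈ Finset.range k, (x + 1 + j)
def phR (m : ℕ) : ℝ := ∏ j ∈ Finset.range m, (1 / 2 + j)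

lemma paR_pos {x : ℝ} (hx : 0 ≤ x) (k : ℕ) : 0 < paR x k :=
  Finset.prod_pos fun j _ => by positivity

lemma phR_pos (m : ℕ) : 0 < phR m := Finset.prod_pos fun j _ => by positivity

lemma paR_succ (x : ℝ) (k : ℕ) : paR x (k + 1) = paR x k * (x + 1 + k) :=
  Finset.prod_range_succ _ _

lemma phR_succ (m : ℕ) : phR (m + 1) = phR m * (1 / 2 + m) :=
  Finset.prod_range_succ _ _

lemma norm_pochC_le (x : ℂ) (k : ℕ) : ‖pochC x k‖ ≤ paR ‖x‖ k := by
  rw [pochC_eq_prod, norm_prod]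
  refine Finset.prod_le_prod (fun j _ => norm_nonneg _) fun j _ => ?_
  calc ‖x + (j:ℂ)‖ ≤ ‖x‖ + ‖(j:ℂ)‖ := norm_add_le _ _
    _ ≤ ‖x‖ + 1 + j := by rw [Complex.norm_natCast]; linarith

lemma half_le_norm {c : ℂ} {n : ℕ} (hc : ‖c + n‖ < 1 / 2) {j : ℕ} (hj : j ≠ n) :
    (1 / 2 : ℝ) ≤ ‖c + j‖ := by
  have h0 : c + j = ((j:ℂ) - n) + (c + n) := by ring
  have h1 : (1:ℝ) ≤ ‖(j:ℂ) - (n:ℂ)‖ := by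
    have : (j:ℂ) - n = (((j:ℤ) - n : ℤ) : ℂ) := by push_cast; ring
    rw [this, Complex.norm_intCast]
    have hne : ((j:ℤ) - n) ≠ 0 := by omega
    exact_mod_cast Int.one_le_abs hne
  calc (1/2 : ℝ) ≤ ‖(j:ℂ) - n‖ - ‖-(c + n)‖ := by rw [norm_neg]; linarith
    _ ≤ ‖((j:ℂ) - n) - (-(c + n))‖ := norm_sub_norm_le _ _
    _ = ‖c + j‖ := by rw [h0]; ring_nf

lemma pochC_lower {c : ℂ} {n : ℕ} (hc : ‖c + n‖ < 1 / 2) {k : ℕ} (hk : k ≤ n) :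
    (1 / 2 : ℝ) ^ k ≤ ‖pochC c k‖ := by
  rw [pochC_eq_prod, norm_prod]
  have hp : ((1:ℝ)/2) ^ k = ∏ _j ∈ Finset.range k, (1/2 : ℝ) := by simp
  rw [hp]
  exact Finset.prod_le_prod (fun j _ => by positivity)
    (fun j hj => half_le_norm hc (by simp only [Finset.mem_range] at hj; omega))

lemma pochC_shift_lower {c : ℂ} {n : ℕ} (hc : ‖c + n‖ < 1 / 2) (m : ℕ) :
    phR m ≤ ‖pochC (c + n + 1) m‖ := by
  rw [pochC_eq_prod, norm_prod, phR]
  refine Finset.prod_le_prod (fun j _ => by positivity) fun j _ => ?_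
  have h0 : c + n + 1 + j = ((1 : ℂ) + j) + (c + n) := by ring
  have h1 : ‖(1 : ℂ) + j‖ = 1 + (j:ℝ) := by
    rw [show (1:ℂ) + j = ((1 + j : ℕ):ℂ) by push_cast; ring, Complex.norm_natCast]; push_cast; ring
  calc (1/2 : ℝ) + j ≤ ‖(1:ℂ) + j‖ - ‖-(c + n)‖ := by rw [norm_neg, h1]; linarith
    _ ≤ ‖((1:ℂ) + j) - (-(c + n))‖ := norm_sub_norm_le _ _
    _ = ‖c + n + 1 + j‖ := by rw [h0]; ring_nf

lemma frac_helper (r x₁ x₂ y₁ y₂ : ℝ) (h₁ : y₁ ≠ 0) (h₂ : y₂ ≠ 0) :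
    r * (x₁ / y₁ + 1) * (x₂ / y₂ + 1) = r * (x₁ + y₁) * (x₂ + y₂) / (y₁ * y₂) := by
  field_simp

lemma ratio_helper {N D x y : ℝ} (hN : N ≠ 0) (hD : D ≠ 0) (hy : y ≠ 0) :
    (N * x / (D * y)) / (N / D) = x / y := by
  field_simp

lemma B_summable (A B₀ : ℝ) (hA : 0 ≤ A) (hB : 0 ≤ B₀) {r : ℝ} (hr0 : 0 < r) (hr1 : r < 1)
    (n : ℕ) :
    Summable (fun k : ℕ =>
      2 ^ n * paR A k * paR B₀ k * r ^ k / (phR (k - (n + 1)) * (k.factorial : ℝ))) := by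
  set f : ℕ → ℝ := fun k =>
      2 ^ n * paR A k * paR B₀ k * r ^ k / (phR (k - (n + 1)) * (k.factorial : ℝ)) with hf
  have hfpos : ∀ k, 0 < f k := by
    intro k
    have := paR_pos hA k
    have := paR_pos hB k
    have := phR_pos (k - (n + 1))
    have : (0:ℝ) < k.factorial := by exact_mod_cast k.factorial_pos
    positivity
  have hu : Tendsto (fun k : ℕ => A / (k + 1) + 1) atTop (𝓝 1) := by
    have := (tendsto_one_div_add_atTop_nhds_zero_nat).const_mul A
    simpa [mul_one_div, div_eq_mul_inv] using this.add (tendsto_const_nhds (x := (1:ℝ)))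
  have hd : Tendsto (fun k : ℕ => (k : ℝ) + (1/2 - (n + 1))) atTop atTop :=
    tendsto_atTop_add_const_right _ _ tendsto_natCast_atTop_atTop
  have hv : Tendsto (fun k : ℕ => (B₀ + 3/2 + n) / ((k:ℝ) + (1/2 - (n+1))) + 1) atTop (𝓝 1) := by
    have h0 := hd.inv_tendsto_atTop
    have := h0.const_mul (B₀ + 3/2 + n)
    simpa [div_eq_mul_inv] using this.add (tendsto_const_nhds (x := (1:ℝ)))
  have hE : Tendsto (fun k : ℕ => r * (A / (k + 1) + 1) *
      ((B₀ + 3/2 + n) / ((k:ℝ) + (1/2 - (n+1))) + 1)) atTop (𝓝 r) := by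
    have := ((tendsto_const_nhds (x := r)).mul hu).mul hv
    simpa using this
  refine summable_of_ratio_test_tendsto_lt_one hr1
    (Eventually.of_forall fun k => (hfpos k).ne') ?_
  refine Tendsto.congr' ?_ hE
  filter_upwards [eventually_ge_atTop (n + 1)] with k hk
  have e1 : k + 1 - (n + 1) = (k - (n + 1)) + 1 := by omega
  have e2 : ((k - (n + 1) : ℕ) : ℝ) = (k : ℝ) - (n + 1) := by
    push_cast [Nat.cast_sub hk]; ring
  have h1 : phR (k - (n+1)) ≠ 0 := (phR_pos _).ne'
  have h2 : (k.factorial : ℝ) ≠ 0 := by exact_mod_cast k.factorial_ne_zero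
  have h3 : ((k:ℝ) + 1) ≠ 0 := by positivity
  have h4 : ((k:ℝ) + (1/2 - (n+1))) ≠ 0 := by
    have : (n:ℝ) + 1 ≤ k := by exact_mod_cast hk
    intro h; nlinarith
  have hN : 2 ^ n * paR A k * paR B₀ k * r ^ k ≠ 0 := by
    have := paR_pos hA k; have := paR_pos hB k; positivity
  have hD : phR (k - (n+1)) * (k.factorial : ℝ) ≠ 0 := mul_ne_zero h1 h2
  have hy : (1/2 + ((k:ℝ) - (n+1))) * ((k:ℝ) + 1) ≠ 0 := by
    apply mul_ne_zero _ h3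
    intro h; apply h4; linarith [h]
  have hfk1 : f (k + 1) = (2 ^ n * paR A k * paR B₀ k * r ^ k) *
      (r * (A + 1 + (k:ℝ)) * (B₀ + 1 + (k:ℝ))) /
      ((phR (k - (n+1)) * (k.factorial : ℝ)) * ((1/2 + ((k:ℝ) - (n+1))) * ((k:ℝ) + 1))) := by
    show 2 ^ n * paR A (k+1) * paR B₀ (k+1) * r ^ (k+1) /
        (phR (k + 1 - (n + 1)) * ((k+1).factorial : ℝ)) = _
    rw [e1, paR_succ, paR_succ, phR_succ, pow_succ, Nat.factorial_succ, e2]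
    push_cast
    ring_nf
  have hfk : f k = (2 ^ n * paR A k * paR B₀ k * r ^ k) /
      (phR (k - (n+1)) * (k.factorial : ℝ)) := rfl
  rw [Real.norm_eq_abs, Real.norm_eq_abs, abs_of_pos (hfpos (k+1)), abs_of_pos (hfpos k),
    hfk1, hfk, ratio_helper hN hD hy]
  have h5 : (1/2 + ((k:ℝ) - (n+1))) = (k:ℝ) + (1/2 - (n+1)) := by ring
  rw [h5, frac_helper _ _ _ _ _ h3 h4,
    div_eq_div_iff (mul_ne_zero h3 h4) (mul_ne_zero h4 h3)]
  ring

lemma halfpow_div (n : ℕ) (x y : ℝ) : x / ((1/2 : ℝ) ^ n * y) = 2 ^ n * x / y := by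
  rw [← div_div, div_pow, one_pow, div_div_eq_mul_div, div_one]
  ring

lemma negpow_div (n : ℕ) (x y : ℂ) : x / ((-1:ℂ) ^ n * y) = (-1) ^ n * x / y := by
  have h : ((-1:ℂ) ^ n)⁻¹ = (-1) ^ n := by
    rw [← inv_pow, inv_neg, inv_one]
  rw [← div_div, div_eq_mul_inv x, h]
  ring

theorem gaussF_residue (a b ζ : ℂ) (hζ : ‖ζ‖ < 1) (n : ℕ) :
    Tendsto (fun c : ℂ => (c + (n : ℂ)) * gaussF a b c ζ)
      (𝓝[≠] (-(n : ℂ)))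
      (𝓝 ((-1 : ℂ) ^ n * ζ ^ (n + 1) * pochC a (n + 1) * pochC b (n + 1) /
        ((n.factorial : ℂ) * ((n + 1).factorial : ℂ)) *
        gaussF (a + n + 1) (b + n + 1) ((n : ℂ) + 2) ζ)) := by
  -- setup
  set r : ℝ := (1 + ‖ζ‖) / 2 with hrdef
  have hr0 : 0 < r := by positivity
  have hrζ : ‖ζ‖ ≤ r := by rw [hrdef]; linarith
  have hr1 : r < 1 := by rw [hrdef]; linarith
  set B : ℕ → ℝ := fun k =>
    2 ^ n * paR ‖a‖ k * paR ‖b‖ k * r ^ k / (phR (k - (n + 1)) * (k.factorial : ℝ)) with hBdef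
  have hB : Summable B := B_summable ‖a‖ ‖b‖ (norm_nonneg a) (norm_nonneg b) hr0 hr1 n
  set h : ℂ → ℕ → ℂ := fun c k =>
    (c + n) * (pochC a k * pochC b k * ζ ^ k / (pochC c k * (k.factorial : ℂ))) with hhdef
  set φ : ℂ → ℕ → ℂ := fun c k =>
    pochC a k * pochC b k * ζ ^ k /
      (pochC c n * pochC (c + n + 1) (k - (n + 1)) * (k.factorial : ℂ)) with hφdef
  set g : ℕ → ℂ := fun k =>
    if n + 1 ≤ k then pochC a k * pochC b k * ζ ^ k /
      (pochC (-(n:ℂ)) n * pochC 1 (k - (n + 1)) * (k.factorial : ℂ)) else 0 with hgdef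
  -- the key algebraic identity away from the pole
  have hkey : ∀ c : ℂ, c ≠ -(n:ℂ) → ∀ k, n + 1 ≤ k → h c k = φ c k := by
    intro c hcne k hk
    have hc0 : c + (n:ℂ) ≠ 0 := fun h0 => hcne (by
      have := eq_neg_of_add_eq_zero_left h0
      exact this)
    obtain ⟨m, rfl⟩ : ∃ m, k = (n + 1) + m := ⟨k - (n + 1), by omega⟩
    have hm : (n + 1) + m - (n + 1) = m := by omega
    have hsplit : pochC c ((n + 1) + m) =
        pochC c n * (c + n) * pochC (c + n + 1) m := by
      rw [pochC_add c (n+1) m, pochC_succ]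
      have : c + ((n:ℕ) + 1 : ℕ) = c + n + 1 := by push_cast; ring
      rw [this]
    show (c + n) * (pochC a ((n+1)+m) * pochC b ((n+1)+m) * ζ ^ ((n+1)+m) /
        (pochC c ((n+1)+m) * (((n+1)+m).factorial : ℂ))) = _
    rw [hsplit, hφdef]
    simp only [hm]
    have hden : pochC c n * (c + n) * pochC (c + n + 1) m * (((n+1)+m).factorial : ℂ)
        = (c + n) * (pochC c n * pochC (c + n + 1) m * (((n+1)+m).factorial : ℂ)) := by ring
    rw [hden, ← mul_div_assoc, mul_div_mul_left _ _ hc0]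
  -- pointwise limits
  have hab : ∀ k, Tendsto (fun c => h c k) (𝓝[≠] (-(n:ℂ))) (𝓝 (g k)) := by
    intro k
    by_cases hk : n + 1 ≤ k
    · -- pole-cancelling terms
      obtain ⟨m, rfl⟩ : ∃ m, k = (n + 1) + m := ⟨k - (n + 1), by omega⟩
      have hm : (n + 1) + m - (n + 1) = m := by omega
      have hcont : Continuous fun c : ℂ =>
          pochC c n * pochC (c + n + 1) m * ((((n+1)+m).factorial : ℕ) : ℂ) := by
        apply Continuous.mul
        apply Continuous.mul
        · exact (ascPochhammer ℂ n).continuous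
        · exact ((ascPochhammer ℂ m).continuous).comp
            (((continuous_id.add continuous_const).add continuous_const))
        · exact continuous_const
      have hval : pochC (-(n:ℂ)) n * pochC ((-(n:ℂ)) + n + 1) m * ((((n+1)+m).factorial : ℕ) : ℂ)
          = pochC (-(n:ℂ)) n * pochC 1 m * ((((n+1)+m).factorial : ℕ) : ℂ) := by
        have : (-(n:ℂ)) + n + 1 = 1 := by ring
        rw [this]
      have hne : pochC (-(n:ℂ)) n * pochC 1 m * ((((n+1)+m).factorial : ℕ) : ℂ) ≠ 0 := by
        apply mul_ne_zero (mul_ne_zero _ _)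
        · exact_mod_cast Nat.factorial_ne_zero _
        · rw [pochC_neg_nat]
          apply mul_ne_zero (pow_ne_zero _ (by norm_num))
          exact_mod_cast Nat.factorial_ne_zero n
        · rw [pochC_one]
          exact_mod_cast Nat.factorial_ne_zero m
      have tφ : Tendsto (fun c => φ c ((n+1)+m)) (𝓝 (-(n:ℂ))) (𝓝 (g ((n+1)+m))) := by
        have : g ((n+1)+m) = pochC a ((n+1)+m) * pochC b ((n+1)+m) * ζ ^ ((n+1)+m) /
            (pochC (-(n:ℂ)) n * pochC 1 m * ((((n+1)+m).factorial : ℕ) : ℂ)) := by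
          rw [hgdef]
          simp only [hm, if_pos hk]
        rw [this]
        simp only [hφdef, hm]
        exact tendsto_const_nhds.div (by rw [← hval]; exact hcont.tendsto _) (hval ▸ hne)
      refine Tendsto.congr' ?_ (tφ.mono_left nhdsWithin_le_nhds)
      filter_upwards [self_mem_nhdsWithin] with c hc
      exact (hkey c hc _ hk).symm
    · -- regular terms; limit 0
      have hgk : g k = 0 := by rw [hgdef]; exact if_neg hk
      rw [hgk]
      have hne : pochC (-(n:ℂ)) k * ((k.factorial : ℕ) : ℂ) ≠ 0 := by
        apply mul_ne_zero
        · rw [pochC_eq_prod]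
          apply Finset.prod_ne_zero_iff.mpr
          intro j hj
          rw [Finset.mem_range] at hj
          intro h0
          have : (j : ℂ) = (n : ℂ) := by linear_combination h0
          have : j = n := Nat.cast_injective this
          omega
        · exact_mod_cast Nat.factorial_ne_zero _
      have t1 : Tendsto (fun c : ℂ => c + (n:ℂ)) (𝓝 (-(n:ℂ))) (𝓝 0) := by
        have := (continuous_id.add (continuous_const (y := (n:ℂ)))).tendsto (-(n:ℂ))
        rw [show (0:ℂ) = -(n:ℂ) + n by ring]; exact this
      have t2 : Tendsto (fun c : ℂ => pochC a k * pochC b k * ζ ^ k /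
          (pochC c k * (k.factorial : ℂ)))
          (𝓝 (-(n:ℂ))) (𝓝 (pochC a k * pochC b k * ζ ^ k /
          (pochC (-(n:ℂ)) k * (k.factorial : ℂ)))) := by
        refine tendsto_const_nhds.div ?_ (by exact_mod_cast hne)
        exact (((ascPochhammer ℂ k).continuous).mul continuous_const).tendsto _
      have := t1.mul t2
      rw [zero_mul] at this
      exact this.mono_left nhdsWithin_le_nhds
  -- uniform bound for φ
  have bound2 : ∀ c : ℂ, ‖c + (n:ℂ)‖ < 1/2 → ∀ k, n + 1 ≤ k → ‖φ c k‖ ≤ B k := by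
    intro c hc k hk
    have hfac : (0:ℝ) < (k.factorial : ℝ) := by exact_mod_cast k.factorial_pos
    have hnum : ‖pochC a k‖ * ‖pochC b k‖ * ‖ζ‖ ^ k ≤ paR ‖a‖ k * paR ‖b‖ k * r ^ k := by
      apply mul_le_mul
      · exact mul_le_mul (norm_pochC_le a k) (norm_pochC_le b k) (norm_nonneg _)
          (paR_pos (norm_nonneg a) k).le
      · exact pow_le_pow_left₀ (norm_nonneg ζ) hrζ k
      · positivity
      · exact (mul_pos (paR_pos (norm_nonneg a) k) (paR_pos (norm_nonneg b) k)).le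
    have hden : (1/2:ℝ)^n * phR (k - (n+1)) * (k.factorial : ℝ) ≤
        ‖pochC c n‖ * ‖pochC (c + n + 1) (k - (n+1))‖ * (k.factorial : ℝ) := by
      apply mul_le_mul_of_nonneg_right _ hfac.le
      exact mul_le_mul (pochC_lower hc le_rfl) (pochC_shift_lower hc _)
        (phR_pos _).le (norm_nonneg _)
    have hφnorm : ‖φ c k‖ = ‖pochC a k‖ * ‖pochC b k‖ * ‖ζ‖ ^ k /
        (‖pochC c n‖ * ‖pochC (c + n + 1) (k - (n+1))‖ * (k.factorial : ℝ)) := by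
      rw [hφdef]
      simp [norm_mul, norm_div, norm_pow, Complex.norm_natCast]
    rw [hφnorm]
    calc ‖pochC a k‖ * ‖pochC b k‖ * ‖ζ‖ ^ k /
        (‖pochC c n‖ * ‖pochC (c + n + 1) (k - (n+1))‖ * (k.factorial : ℝ))
        ≤ paR ‖a‖ k * paR ‖b‖ k * r ^ k /
          ((1/2:ℝ)^n * phR (k - (n+1)) * (k.factorial : ℝ)) := by
          apply div_le_div₀ (mul_nonneg (mul_pos (paR_pos (norm_nonneg a) k)
              (paR_pos (norm_nonneg b) k)).le (pow_nonneg hr0.le k)) hnum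
            (mul_pos (mul_pos (pow_pos (by norm_num) n) (phR_pos _)) hfac) hden
      _ = B k := by
          rw [hBdef]
          have : (1/2:ℝ)^n * phR (k - (n+1)) * (k.factorial : ℝ)
              = (1/2:ℝ)^n * (phR (k - (n+1)) * (k.factorial : ℝ)) := by ring
          rw [this, halfpow_div]
          ring
  -- uniform bound
  have h_bound : ∀ᶠ c in 𝓝[≠] (-(n:ℂ)), ∀ k, ‖h c k‖ ≤ B k := by
    have ev1 : ∀ᶠ c in 𝓝[≠] (-(n:ℂ)), ‖c + (n:ℂ)‖ < 1/2 := by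
      apply eventually_nhdsWithin_of_eventually_nhds
      have : Continuous fun c : ℂ => ‖c + (n:ℂ)‖ :=
        (continuous_id.add continuous_const).norm
      have h0 : ‖(-(n:ℂ)) + (n:ℂ)‖ < 1/2 := by
        rw [neg_add_cancel, norm_zero]; norm_num
      exact (this.tendsto _).eventually_lt_const h0
    filter_upwards [ev1, self_mem_nhdsWithin] with c hc hcne k
    by_cases hk : n + 1 ≤ k
    · rw [hkey c hcne k hk]
      exact bound2 c hc k hk
    · -- small k
      have hkn : k ≤ n := by omega
      have hfac : (0:ℝ) < (k.factorial : ℝ) := by exact_mod_cast k.factorial_pos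
      have hm0 : k - (n+1) = 0 := by omega
      have hhnorm : ‖h c k‖ = ‖c + (n:ℂ)‖ * (‖pochC a k‖ * ‖pochC b k‖ * ‖ζ‖ ^ k /
          (‖pochC c k‖ * (k.factorial : ℝ))) := by
        rw [hhdef]
        simp [norm_mul, norm_div, norm_pow, Complex.norm_natCast]
      rw [hhnorm]
      have hnum : ‖pochC a k‖ * ‖pochC b k‖ * ‖ζ‖ ^ k ≤ paR ‖a‖ k * paR ‖b‖ k * r ^ k := by
        apply mul_le_mul
        · exact mul_le_mul (norm_pochC_le a k) (norm_pochC_le b k) (norm_nonneg _)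
            (paR_pos (norm_nonneg a) k).le
        · exact pow_le_pow_left₀ (norm_nonneg ζ) hrζ k
        · positivity
        · exact (mul_pos (paR_pos (norm_nonneg a) k) (paR_pos (norm_nonneg b) k)).le
      have step1 : ‖c + (n:ℂ)‖ * (‖pochC a k‖ * ‖pochC b k‖ * ‖ζ‖ ^ k /
          (‖pochC c k‖ * (k.factorial : ℝ)))
          ≤ (1/2) * (paR ‖a‖ k * paR ‖b‖ k * r ^ k / ((1/2:ℝ)^k * (k.factorial : ℝ))) := by
        apply mul_le_mul hc.le _ (by positivity) (by norm_num)
        apply div_le_div₀ (mul_nonneg (mul_pos (paR_pos (norm_nonneg a) k)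
            (paR_pos (norm_nonneg b) k)).le (pow_nonneg hr0.le k)) hnum (by positivity)
          (mul_le_mul_of_nonneg_right (pochC_lower hc hkn) hfac.le)
      refine step1.trans ?_
      rw [hBdef]
      simp only [hm0]
      have hph0 : phR 0 = 1 := by simp [phR]
      rw [hph0, one_mul]
      have key : (1/2:ℝ) * (paR ‖a‖ k * paR ‖b‖ k * r ^ k / ((1/2:ℝ)^k * (k.factorial : ℝ)))
          = (1/2:ℝ) * 2^k * (paR ‖a‖ k * paR ‖b‖ k * r ^ k / (k.factorial : ℝ)) := by
        have h1 : paR ‖a‖ k * paR ‖b‖ k * r ^ k / ((1/2:ℝ)^k * (k.factorial : ℝ))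
            = 2^k * (paR ‖a‖ k * paR ‖b‖ k * r ^ k) / (k.factorial : ℝ) := halfpow_div ..
        rw [h1]; ring
      rw [key]
      have h2 : (1/2:ℝ) * 2^k ≤ 2^n := by
        have h2' : (2:ℝ)^k ≤ 2^(n+1) := pow_le_pow_right₀ (by norm_num) (by omega)
        have h2'' : (2:ℝ)^(n+1) = 2^n * 2 := by ring
        linarith
      calc (1/2:ℝ) * 2^k * (paR ‖a‖ k * paR ‖b‖ k * r ^ k / (k.factorial : ℝ))
          ≤ 2^n * (paR ‖a‖ k * paR ‖b‖ k * r ^ k / (k.factorial : ℝ)) := by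
            exact mul_le_mul_of_nonneg_right h2 (div_nonneg (mul_nonneg
              (mul_pos (paR_pos (norm_nonneg a) k) (paR_pos (norm_nonneg b) k)).le
              (pow_nonneg hr0.le k)) (Nat.cast_nonneg _))
        _ = 2 ^ n * paR ‖a‖ k * paR ‖b‖ k * r ^ k / (k.factorial : ℝ) := by ring
  -- the main convergence statement
  have main := tendsto_tsum_of_dominated_convergence hB hab h_bound
  -- identify the function with (c+n) * gaussF
  have hfun : (fun c : ℂ => (c + (n:ℂ)) * gaussF a b c ζ) = fun c => ∑' k, h c k := by
    funext c
    rw [gaussF, ← tsum_mul_left]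
  rw [hfun]
  -- identify the limit
  have hg_le : ∀ k, ‖g k‖ ≤ B k := by
    intro k
    by_cases hk : n + 1 ≤ k
    · have : g k = φ (-(n:ℂ)) k := by
        simp only [hgdef, hφdef, if_pos hk]
        have h1 : (-(n:ℂ)) + n + 1 = 1 := by ring
        rw [h1]
      rw [this]
      exact bound2 (-(n:ℂ)) (by rw [neg_add_cancel, norm_zero]; norm_num) k hk
    · rw [hgdef]
      simp only [if_neg hk, norm_zero]
      have := paR_pos (norm_nonneg a) k
      have := paR_pos (norm_nonneg b) k
      have := phR_pos (k - (n+1))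
      have : (0:ℝ) < (k.factorial : ℝ) := by exact_mod_cast k.factorial_pos
      rw [hBdef]
      positivity
  have hgsum : Summable g := hB.of_norm_bounded hg_le
  have hshift : ∑' k, g k = ∑' m, g (m + (n + 1)) := by
    rw [← hgsum.sum_add_tsum_nat_add (n+1)]
    have : ∑ i ∈ Finset.range (n+1), g i = 0 := by
      apply Finset.sum_eq_zero
      intro i hi
      rw [Finset.mem_range] at hi
      rw [hgdef]
      exact if_neg (by omega)
    rw [this, zero_add]
  have hterm : ∀ m : ℕ, g (m + (n + 1)) =
      (-1 : ℂ) ^ n * ζ ^ (n + 1) * pochC a (n + 1) * pochC b (n + 1) /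
        ((n.factorial : ℂ) * ((n + 1).factorial : ℂ)) *
      (pochC (a + n + 1) m * pochC (b + n + 1) m * ζ ^ m /
        (pochC ((n:ℂ) + 2) m * (m.factorial : ℂ))) := by
    intro m
    have hidx : m + (n + 1) = (n + 1) + m := by omega
    have hsub : m + (n + 1) - (n + 1) = m := by omega
    simp only [hgdef, if_pos (show n + 1 ≤ m + (n + 1) by omega), hsub]
    rw [hidx, pochC_add a (n+1) m, pochC_add b (n+1) m, pow_add, pochC_neg_nat]
    have hcasta : a + ((n + 1 : ℕ) : ℂ) = a + n + 1 := by push_cast; ring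
    have hcastb : b + ((n + 1 : ℕ) : ℂ) = b + n + 1 := by push_cast; ring
    rw [hcasta, hcastb]
    have hfact : ((((n+1)+m).factorial : ℕ) : ℂ) =
        ((n+1).factorial : ℂ) * pochC ((n:ℂ) + 2) m := by
      rw [← pochC_one ((n+1)+m), pochC_add 1 (n+1) m, pochC_one]
      congr 1
      have : (1 : ℂ) + ((n + 1 : ℕ) : ℂ) = (n:ℂ) + 2 := by push_cast; ring
      rw [this]
    rw [hfact]
    have hD : (-1:ℂ)^n * (n.factorial : ℂ) * pochC 1 m *
        (((n+1).factorial : ℂ) * pochC ((n:ℂ) + 2) m)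
        = (-1:ℂ)^n * ((n.factorial : ℂ) * pochC 1 m *
          (((n+1).factorial : ℂ) * pochC ((n:ℂ) + 2) m)) := by ring
    rw [hD, negpow_div, pochC_one]
    have e1 : (n.factorial : ℂ) ≠ 0 := by exact_mod_cast Nat.factorial_ne_zero n
    have e2 : (m.factorial : ℂ) ≠ 0 := by exact_mod_cast Nat.factorial_ne_zero m
    have e3 : ((n+1).factorial : ℂ) ≠ 0 := by exact_mod_cast Nat.factorial_ne_zero (n+1)
    have e4 : pochC ((n:ℂ) + 2) m ≠ 0 := pochC_nat_ne_zero n m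
    field_simp
  have hlim : ∑' k, g k = (-1 : ℂ) ^ n * ζ ^ (n + 1) * pochC a (n + 1) * pochC b (n + 1) /
        ((n.factorial : ℂ) * ((n + 1).factorial : ℂ)) *
        gaussF (a + n + 1) (b + n + 1) ((n : ℂ) + 2) ζ := by
    rw [hshift, gaussF, ← tsum_mul_left]
    exact tsum_congr hterm
  rw [← hlim]
  exact main
end
end
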